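/- arXiv:1611.02867 — 4 statements merged into one kernel-verified Lean document; each statement's English description precedes it below -/
import Mathlib

section
/- Let A_0, ..., A_{n-1} be finite idempotent algebras of a common signature sharing a common Taylor term, and suppose there exists k with 0 < k < n such that A_i is abelian for all i < k and A_i has a sink s_i ∈ A_i for all i ≥ k. If R ≤_sd A_0 × ... × A_{n-1} is a subdirect product, then Proj_{{0,...,k-1}} R × {s_k} × {s_{k+1}} × ... × {s_{n-1}} ⊆ R. -/
/-- A (functional) signature: a type of operation symbols, each with an arity. -/
structure Signature where
  ops : Type
  arity : ops → ℕ

/-- Terms of a signature in `n` variables. -/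
inductive UTerm (σ : Signature) : ℕ → Type
  | var : ∀ {n}, Fin n → UTerm σ n
  | app : ∀ {n} (f : σ.ops), (Fin (σ.arity f) → UTerm σ n) → UTerm σ n

/-- An algebra of signature `σ` on carrier `A`. -/
structure UAlgebra (σ : Signature) (A : Type) where
  interp : ∀ f : σ.ops, (Fin (σ.arity f) → A) → A

namespace UAlgebra

variable {σ : Signature} {A : Type}

/-- The term operation induced by a term. -/
def eval (Alg : UAlgebra σ A) {n : ℕ} : UTerm σ n → (Fin n → A) → A
  | .var i, env => env i
  | .app f ts, env => Alg.interp f fun j => Alg.eval (ts j) env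

/-- An algebra is idempotent if every basic operation satisfies `f(a,…,a) = a`. -/
def Idempotent (Alg : UAlgebra σ A) : Prop :=
  ∀ (f : σ.ops) (a : A), Alg.interp f (fun _ => a) = a

/-- A congruence: an equivalence relation compatible with the basic operations. -/
def IsCong (Alg : UAlgebra σ A) (θ : A → A → Prop) : Prop :=
  (∀ a, θ a a) ∧ (∀ a b, θ a b → θ b a) ∧ (∀ a b c, θ a b → θ b c → θ a c) ∧
  ∀ (f : σ.ops) (x y : Fin (σ.arity f) → A),
    (∀ j, θ (x j) (y j)) → θ (Alg.interp f x) (Alg.interp f y)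

/-- A subuniverse: a subset closed under the basic operations. -/
def IsSubuniv (Alg : UAlgebra σ A) (B : Set A) : Prop :=
  ∀ (f : σ.ops) (x : Fin (σ.arity f) → A), (∀ j, x j ∈ B) → Alg.interp f x ∈ B

/-- A simple algebra: more than one element, and the only congruences are `0` and `1`. -/
def Simple (Alg : UAlgebra σ A) : Prop :=
  (∃ a b : A, a ≠ b) ∧
  ∀ θ : A → A → Prop, Alg.IsCong θ → (∀ a b, θ a b ↔ a = b) ∨ (∀ a b, θ a b)

/-- An abelian algebra: for every `(ℓ+m)`-ary term operation `t` and tuples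
`a b : Aᶩ`, `u v : Aᵐ`, `t(a,u) = t(a,v) ↔ t(b,u) = t(b,v)`. -/
def Abelian (Alg : UAlgebra σ A) : Prop :=
  ∀ (ℓ m : ℕ) (t : UTerm σ (ℓ + m)) (a b : Fin ℓ → A) (u v : Fin m → A),
    (Alg.eval t (Fin.append a u) = Alg.eval t (Fin.append a v) ↔
      Alg.eval t (Fin.append b u) = Alg.eval t (Fin.append b v))

/-- `B` is an absorbing subalgebra of `A` with respect to the `k`-ary term `t`:
`B` is a (nonempty) subuniverse, and applying `t` to arguments all of which lie
in `B` except possibly one (arbitrary in `A`) lands in `B`. -/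
def AbsorbingWith (Alg : UAlgebra σ A) (B : Set A) {k : ℕ} (t : UTerm σ k) : Prop :=
  B.Nonempty ∧ Alg.IsSubuniv B ∧
  ∀ (j : Fin k) (x : Fin k → A), (∀ i, i ≠ j → x i ∈ B) → Alg.eval t x ∈ B

/-- `B ◁ A` : `B` is absorbing with respect to some term. -/
def Absorbing (Alg : UAlgebra σ A) (B : Set A) : Prop :=
  ∃ (k : ℕ) (t : UTerm σ k), Alg.AbsorbingWith B t

/-- `B ◁◁ A` : `B` is minimal among absorbing subuniverses of `A`. -/
def MinAbsorbing (Alg : UAlgebra σ A) (B : Set A) : Prop :=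
  Alg.Absorbing B ∧ ∀ C : Set A, Alg.Absorbing C → C ⊆ B → C = B

/-- A congruence of the subalgebra with universe `R`. -/
def IsCongOn (Alg : UAlgebra σ A) (R : Set A) (θ : A → A → Prop) : Prop :=
  (∀ a ∈ R, θ a a) ∧ (∀ a b, θ a b → θ b a) ∧ (∀ a b c, θ a b → θ b c → θ a c) ∧
  (∀ a b, θ a b → a ∈ R ∧ b ∈ R) ∧
  ∀ (f : σ.ops) (x y : Fin (σ.arity f) → A),
    (∀ j, θ (x j) (y j)) → θ (Alg.interp f x) (Alg.interp f y)

/-- The join of `θ₁` and `θ₂` in the congruence lattice of the subalgebra `R`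
is the top congruence `1_R`. -/
def JoinIsTop (Alg : UAlgebra σ A) (R : Set A) (θ₁ θ₂ : A → A → Prop) : Prop :=
  ∀ θ : A → A → Prop, Alg.IsCongOn R θ →
    (∀ a b, θ₁ a b → θ a b) → (∀ a b, θ₂ a b → θ a b) →
    ∀ a ∈ R, ∀ b ∈ R, θ a b

end UAlgebra

/-- Interpreting a `Fin 2`-indexed choice of the variables `x`, `y`. -/
def pick {A : Type} (x y : A) : Fin 2 → A := fun b => if b = 0 then x else y

/-- `t` is a common Taylor term for the family `Alg`: it is idempotent in every
algebra of the family, and for each coordinate `i` there is an identity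
`t(u_0,…,u_{n-1}) ≈ t(v_0,…,v_{n-1})` (each `u_j, v_j ∈ {x,y}`, `u_i = x`,
`v_i = y`) holding in every algebra of the family. -/
def IsTaylorFamily {σ : Signature} {ι : Type} {A : ι → Type}
    (Alg : ∀ i, UAlgebra σ (A i)) {n : ℕ} (t : UTerm σ n) : Prop :=
  ∃ u v : Fin n → Fin n → Fin 2,
    (∀ i : Fin n, u i i = 0 ∧ v i i = 1) ∧
    ∀ k : ι,
      (∀ a : A k, (Alg k).eval t (fun _ => a) = a) ∧
      ∀ (i : Fin n) (x y : A k),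
        (Alg k).eval t (fun j => pick x y (u i j)) =
        (Alg k).eval t (fun j => pick x y (v i j))

/-- Taylor term of a single algebra. -/
def IsTaylorFor {σ : Signature} {A : Type} (Alg : UAlgebra σ A) {n : ℕ}
    (t : UTerm σ n) : Prop :=
  IsTaylorFamily (fun _ : PUnit => Alg) t

/-- The product algebra of a family of algebras of a common signature. -/
def prodAlgebra {σ : Signature} {ι : Type} {A : ι → Type}
    (Alg : ∀ i, UAlgebra σ (A i)) : UAlgebra σ (∀ i, A i) :=
  ⟨fun f x i => (Alg i).interp f (fun j => x j i)⟩

/-- `R ≤_sd ∏ A_i` : `R` is a (nonempty) subuniverse of the product whose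
coordinate projections are all surjective. -/
def IsSubdirect {σ : Signature} {ι : Type} {A : ι → Type}
    (Alg : ∀ i, UAlgebra σ (A i)) (R : Set (∀ i, A i)) : Prop :=
  R.Nonempty ∧ (prodAlgebra Alg).IsSubuniv R ∧
  ∀ (i : ι) (a : A i), ∃ r ∈ R, r i = a

/-- The kernel `η_s` of the projection of `R` onto the coordinates in `s`,
as a relation (congruence of the subalgebra `R`). -/
def projKer {ι : Type} {A : ι → Type} (R : Set (∀ i, A i)) (s : Set ι) :
    (∀ i, A i) → (∀ i, A i) → Prop :=
  fun x y => x ∈ R ∧ y ∈ R ∧ ∀ i ∈ s, x i = y i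

/-- The kernels of the `i`-th and `j`-th coordinate projections of `R` coincide. -/
def kerEq {ι : Type} {A : ι → Type} (R : Set (∀ i, A i)) (i j : ι) : Prop :=
  ∀ x ∈ R, ∀ y ∈ R, (x i = y i ↔ x j = y j)
/-- A cube term: a `k`-ary idempotent term such that for each coordinate `i`
there is an identity `t(x_1,…,x_k) ≈ y` with each `x_j ∈ {x,y}` and `x_i = x`. -/
def IsCubeTerm {σ : Signature} {A : Type} (Alg : UAlgebra σ A) {k : ℕ}
    (t : UTerm σ k) : Prop :=
  (∀ a : A, Alg.eval t (fun _ => a) = a) ∧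
  ∀ i : Fin k, ∃ u : Fin k → Fin 2, u i = 0 ∧
    ∀ x y : A, Alg.eval t (fun j => pick x y (u j)) = y

/-- A term operation depends on its `j`-th argument. -/
def TermDependsOn {σ : Signature} {A : Type} (Alg : UAlgebra σ A) {k : ℕ}
    (t : UTerm σ k) (j : Fin k) : Prop :=
  ∃ (c : Fin k → A) (x y : A),
    Alg.eval t (Function.update c j x) ≠ Alg.eval t (Function.update c j y)

/-- `s` is a sink for `A`: every term operation depending on its `j`-th argument
returns `s` whenever `s` is placed in position `j`. -/
def IsSink {σ : Signature} {A : Type} (Alg : UAlgebra σ A) (s : A) : Prop :=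
  ∀ (k : ℕ) (t : UTerm σ k) (j : Fin k), TermDependsOn Alg t j →
    ∀ c : Fin k → A, Alg.eval t (Function.update c j s) = s

/-- `C(β, γ; δ)` : `β` centralizes `γ` modulo `δ`. -/
def Centralizes {σ : Signature} {A : Type} (Alg : UAlgebra σ A)
    (β γ δ : A → A → Prop) : Prop :=
  ∀ (ℓ m : ℕ) (t : UTerm σ (ℓ + m)) (a b : Fin ℓ → A) (u v : Fin m → A),
    (∀ i, β (a i) (b i)) → (∀ i, γ (u i) (v i)) →
    (δ (Alg.eval t (Fin.append a u)) (Alg.eval t (Fin.append a v)) ↔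
      δ (Alg.eval t (Fin.append b u)) (Alg.eval t (Fin.append b v)))

/-- The join `θ₁ ∨ θ₂` in the congruence lattice of `Alg`: the least congruence
containing `θ₁` and `θ₂`. -/
def conJoin {σ : Signature} {A : Type} (Alg : UAlgebra σ A)
    (θ₁ θ₂ : A → A → Prop) : A → A → Prop :=
  fun x y => ∀ θ : A → A → Prop, Alg.IsCong θ →
    (∀ a b, θ₁ a b → θ a b) → (∀ a b, θ₂ a b → θ a b) → θ x y

/-- The setoid determined by a congruence. -/
def congSetoid {σ : Signature} {A : Type} {Alg : UAlgebra σ A}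
    {δ : A → A → Prop} (h : Alg.IsCong δ) : Setoid A :=
  ⟨δ, ⟨h.1, fun hab => h.2.1 _ _ hab, fun hab hbc => h.2.2.1 _ _ _ hab hbc⟩⟩

/-- The quotient algebra `A/δ` (of a congruence-induced setoid). -/
noncomputable def quotAlgebra {σ : Signature} {A : Type} (Alg : UAlgebra σ A) (s : Setoid A) :
    UAlgebra σ (Quotient s) :=
  ⟨fun f x => Quotient.mk s (Alg.interp f (fun j => (x j).out))⟩

/-- The image `β/δ` of a congruence `β` on the quotient `A/δ`. -/
def quotCong {A : Type} (s : Setoid A) (β : A → A → Prop) :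
    Quotient s → Quotient s → Prop :=
  fun x y => ∃ a b : A, Quotient.mk s a = x ∧ Quotient.mk s b = y ∧ β a b

/-- Row-major pairing of indices: `(i, j) ↦ i * m + j`. -/
def pairIdx {l m : ℕ} (i : Fin l) (j : Fin m) : Fin (l * m) :=
  ⟨i.val * m + j.val, by
    have h1 : i.val * m + j.val < i.val * m + m := Nat.add_lt_add_left j.isLt _
    have h2 : i.val * m + m = (i.val + 1) * m := (Nat.succ_mul i.val m).symm
    have h3 : (i.val + 1) * m ≤ l * m :=
      Nat.mul_le_mul_right m (Nat.succ_le_of_lt i.isLt)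
    omega⟩

/-- Simultaneous substitution into a term. -/
def UTerm.bind {σ : Signature} {n k : ℕ} : UTerm σ n → (Fin n → UTerm σ k) → UTerm σ k
  | .var i, s => s i
  | .app f ts, s => .app f (fun j => (ts j).bind s)

/-- The star composition `f ⋆ g` of terms: the `ℓm`-ary term
`(f ⋆ g)(a₁₁,…,a_{ℓm}) = f(g(a₁₁,…,a₁ₘ), …, g(a_{ℓ1},…,a_{ℓm}))`. -/
def starTerm {σ : Signature} {l m : ℕ} (f : UTerm σ l) (g : UTerm σ m) :
    UTerm σ (l * m) :=
  f.bind (fun i => g.bind (fun j => .var (pairIdx i j)))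

/-- Star composition on arity-indexed terms. -/
def sigStar {σ : Signature} (p q : Σ k, UTerm σ k) : Σ k, UTerm σ k :=
  ⟨p.1 * q.1, starTerm p.2 q.2⟩

/-- The left-associated iterated star `p ⋆ q₀ ⋆ q₁ ⋆ ⋯`. -/
def iterStar {σ : Signature} (p : Σ k, UTerm σ k) :
    List (Σ k, UTerm σ k) → Σ k, UTerm σ k
  | [] => p
  | q :: rest => iterStar (sigStar p q) rest

/-- `B` is an absorbing subuniverse of the subalgebra with universe `R`. -/
def AbsorbingIn {σ : Signature} {A : Type} (Alg : UAlgebra σ A) (R B : Set A) : Prop :=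
  B.Nonempty ∧ B ⊆ R ∧ Alg.IsSubuniv B ∧
  ∃ (k : ℕ) (t : UTerm σ k), ∀ (j : Fin k) (x : Fin k → A),
    (∀ i, i ≠ j → x i ∈ B) → x j ∈ R → Alg.eval t x ∈ B

namespace SinkAux

variable {σ : Signature}

lemma eval_bind {A : Type} (Alg : UAlgebra σ A) {n k : ℕ} (w : UTerm σ n)
    (sub : Fin n → UTerm σ k) (env : Fin k → A) :
    Alg.eval (w.bind sub) env = Alg.eval w (fun i => Alg.eval (sub i) env) := by
  induction w with
  | var i => rfl
  | app f ts ih =>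
    simp only [UTerm.bind, UAlgebra.eval]
    congr 1
    funext j
    exact ih j

lemma eval_diag {A : Type} (Alg : UAlgebra σ A) (hidem : Alg.Idempotent)
    {n : ℕ} (w : UTerm σ n) (a : A) :
    Alg.eval w (fun _ => a) = a := by
  induction w with
  | var i => rfl
  | app f ts ih =>
    simp only [UAlgebra.eval]
    rw [show (fun j => Alg.eval (ts j) fun _ => a) = fun _ => a from funext fun j => ih j]
    exact hidem f a

lemma eval_mem {A : Type} (Alg : UAlgebra σ A) {R : Set A} (hsub : Alg.IsSubuniv R)
    {n : ℕ} (w : UTerm σ n) (env : Fin n → A) (henv : ∀ j, env j ∈ R) :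
    Alg.eval w env ∈ R := by
  induction w with
  | var i => exact henv i
  | app f ts ih => exact hsub f _ (fun j => ih j)

lemma prod_eval {ι : Type} {A : ι → Type} (Alg : ∀ i, UAlgebra σ (A i))
    {n : ℕ} (w : UTerm σ n) (env : Fin n → ∀ i, A i) (i : ι) :
    (prodAlgebra Alg).eval w env i = (Alg i).eval w (fun j => env j i) := by
  induction w with
  | var j => rfl
  | app f ts ih =>
    show (Alg i).interp f _ = (Alg i).interp f _
    congr 1
    funext j
    exact ih j

lemma eval_update_of_not_depends {A : Type} (Alg : UAlgebra σ A) {m : ℕ}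
    (w : UTerm σ m) {j : Fin m} (h : ¬ TermDependsOn Alg w j) (c : Fin m → A) (z : A) :
    Alg.eval w (Function.update c j z) = Alg.eval w c := by
  simp only [TermDependsOn, not_exists] at h
  have h2 : ∀ (c' : Fin m → A) (x y : A),
      Alg.eval w (Function.update c' j x) = Alg.eval w (Function.update c' j y) := by
    intro c' x y
    by_contra hne
    exact h c' x y hne
  have := h2 c z (c j)
  rwa [Function.update_eq_self] at this

lemma eval_eq_of_agree_on_deps {A : Type} (Alg : UAlgebra σ A) {m : ℕ}
    (w : UTerm σ m) (f g : Fin m → A)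
    (h : ∀ j, TermDependsOn Alg w j → f j = g j) : Alg.eval w f = Alg.eval w g := by
  suffices H : ∀ l : List (Fin m), ∀ f g : Fin m → A, (∀ j, j ∉ l → f j = g j) →
      (∀ j, TermDependsOn Alg w j → f j = g j) → Alg.eval w f = Alg.eval w g by
    exact H (List.finRange m) f g (fun j hj => absurd (List.mem_finRange j) hj) h
  intro l
  induction l with
  | nil =>
    intro f g h0 _
    rw [funext fun j => h0 j (List.not_mem_nil (a := j))]
  | cons j l ih =>
    intro f g h0 hd
    have step : Alg.eval w f = Alg.eval w (Function.update f j (g j)) := by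
      by_cases hdep : TermDependsOn Alg w j
      · rw [← hd j hdep, Function.update_eq_self]
      · rw [eval_update_of_not_depends Alg w hdep]
    rw [step]
    apply ih
    · intro j' hj'
      by_cases hjj : j' = j
      · subst hjj; simp
      · rw [Function.update_of_ne hjj]
        exact h0 j' (by simp [hjj, hj'])
    · intro j' hdep
      by_cases hjj : j' = j
      · subst hjj; simp
      · rw [Function.update_of_ne hjj]
        exact hd j' hdep

lemma sink_eval {A : Type} (Alg : UAlgebra σ A) {s : A} (hs : IsSink Alg s)
    {m : ℕ} (w : UTerm σ m) {p : Fin m} (hdep : TermDependsOn Alg w p)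
    (c : Fin m → A) (hc : c p = s) : Alg.eval w c = s := by
  have := hs m w p hdep c
  rw [← hc] at this
  rw [Function.update_eq_self] at this
  rwa [hc] at this

end SinkAux
namespace SinkAux

variable {σ : Signature}

lemma exists_two_deps {A : Type} (Alg : UAlgebra σ A) {nt : ℕ} (t : UTerm σ nt)
    (hid : ∀ a : A, Alg.eval t (fun _ => a) = a)
    (u v : Fin nt → Fin nt → Fin 2) (huv : ∀ i, u i i = 0 ∧ v i i = 1)
    (hident : ∀ (i : Fin nt) (x y : A),
      Alg.eval t (fun j => pick x y (u i j)) = Alg.eval t (fun j => pick x y (v i j)))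
    {a b : A} (hab : a ≠ b) :
    ∃ p p' : Fin nt, p ≠ p' ∧ TermDependsOn Alg t p ∧ TermDependsOn Alg t p' := by
  by_contra hcon
  push_neg at hcon
  by_cases hex : ∃ p, TermDependsOn Alg t p
  · obtain ⟨p, hp⟩ := hex
    have hproj : ∀ c : Fin nt → A, Alg.eval t c = c p := by
      intro c
      have heq : Alg.eval t c = Alg.eval t (fun _ => c p) := by
        apply eval_eq_of_agree_on_deps
        intro j hj
        have hjp : j = p := by
          by_contra hne
          exact (hcon j p hne hj) hp
        subst hjp; rfl
      rw [heq, hid]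
    have h1 := hident p a b
    rw [hproj, hproj] at h1
    simp only [(huv p).1, (huv p).2, pick] at h1
    simp at h1
    exact hab h1
  · push_neg at hex
    have h2 : Alg.eval t (fun _ => a) = Alg.eval t (fun _ => b) :=
      eval_eq_of_agree_on_deps Alg t _ _ (fun j hj => absurd hj (hex j))
    rw [hid, hid] at h2
    exact hab h2


end SinkAux
namespace SinkAux

lemma exists_idempotent_iterate {α : Type} [Finite α] (f : α → α) :
    ∃ N, 0 < N ∧ ∀ x, f^[N] (f^[N] x) = f^[N] x := by
  have key : ∀ i j : ℕ, i < j → f^[i] = f^[j] →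
      ∃ N, 0 < N ∧ ∀ x, f^[N] (f^[N] x) = f^[N] x := by
    intro i j hij heq
    have shift : ∀ m, i ≤ m → f^[m + (j - i)] = f^[m] := by
      intro m hm
      have h1 : f^[m] = f^[(m - i) + i] := by rw [Nat.sub_add_cancel hm]
      have hnat : m + (j - i) = (m - i) + j := by omega
      have h2 : f^[m + (j - i)] = f^[(m - i) + j] := by rw [hnat]
      rw [h1, h2, Function.iterate_add, Function.iterate_add, heq]
    have shiftc : ∀ c : ℕ, f^[(j - i) * (i + 1) + (j - i) * c] = f^[(j - i) * (i + 1)] := by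
      intro c
      induction c with
      | zero => simp
      | succ c ih =>
        have hmul : 1 * (i + 1) ≤ (j - i) * (i + 1) := Nat.mul_le_mul_right _ (by omega)
        have h3 : (j - i) * (i + 1) + (j - i) * (c + 1)
            = ((j - i) * (i + 1) + (j - i) * c) + (j - i) := by ring
        rw [h3, shift ((j - i) * (i + 1) + (j - i) * c) (by omega), ih]
    refine ⟨(j - i) * (i + 1), by have := Nat.mul_le_mul_right (i+1) (show 1 ≤ j - i by omega); omega, fun x => ?_⟩
    have h4 : f^[(j - i) * (i + 1)] ∘ f^[(j - i) * (i + 1)] = f^[(j - i) * (i + 1)] := by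
      rw [← Function.iterate_add]
      exact shiftc (i + 1)
    exact congrFun h4 x
  obtain ⟨a, b, hne, heq⟩ := Finite.exists_ne_map_eq_of_infinite (fun m : ℕ => f^[m])
  rcases hne.lt_or_gt with h | h
  · exact key a b h heq
  · exact key b a h heq.symm

end SinkAux
namespace SinkAux

variable {σ : Signature}

/-- The binary "pattern" term: iterate substituting at the `χ`-positions of `T`;
variable `0` is the constant slot, variable `1` the moving slot. -/
def QTerm {M : ℕ} (T : UTerm σ M) (χ : Fin M → Bool) : ℕ → UTerm σ (1 + 1)
  | 0 => UTerm.var ⟨1, by omega⟩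
  | (N + 1) => T.bind (fun pos => if χ pos then QTerm T χ N else UTerm.var ⟨0, by omega⟩)

lemma append_zero {X : Type} (c z : X) :
    Fin.append (fun _ : Fin 1 => c) (fun _ : Fin 1 => z) ⟨0, by omega⟩ = c := by
  have h : (⟨0, by omega⟩ : Fin (1 + 1)) = Fin.castAdd 1 (0 : Fin 1) := rfl
  rw [h, Fin.append_left]

lemma append_one {X : Type} (c z : X) :
    Fin.append (fun _ : Fin 1 => c) (fun _ : Fin 1 => z) ⟨1, by omega⟩ = z := by
  have h : (⟨1, by omega⟩ : Fin (1 + 1)) = Fin.natAdd 1 (0 : Fin 1) := rfl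
  rw [h, Fin.append_right]

lemma append_coord {ι : Type} {X : ι → Type} (c z : ∀ i, X i) (i : ι) :
    (fun pos => Fin.append (fun _ : Fin 1 => c) (fun _ : Fin 1 => z) pos i)
      = Fin.append (fun _ : Fin 1 => c i) (fun _ : Fin 1 => z i) := by
  funext pos
  refine Fin.addCases (fun j => ?_) (fun j => ?_) pos
  · rw [Fin.append_left, Fin.append_left]
  · rw [Fin.append_right, Fin.append_right]

lemma eval_QTerm {A : Type} (Alg : UAlgebra σ A) {M : ℕ} (T : UTerm σ M)
    (χ : Fin M → Bool) (c z : A) (N : ℕ) :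
    Alg.eval (QTerm T χ N) (Fin.append (fun _ : Fin 1 => c) (fun _ : Fin 1 => z)) =
      (fun z' => Alg.eval T (fun pos => if χ pos then z' else c))^[N] z := by
  induction N with
  | zero =>
    show Fin.append _ _ ⟨1, by omega⟩ = z
    exact append_one c z
  | succ N ih =>
    rw [show QTerm T χ (N + 1)
        = T.bind (fun pos => if χ pos then QTerm T χ N else UTerm.var ⟨0, by omega⟩) from rfl]
    rw [eval_bind, Function.iterate_succ_apply']
    congr 1
    funext pos
    by_cases hb : χ pos
    · simp only [hb, if_true, ih]
    · simp only [hb, if_false, Bool.false_eq_true]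
      exact append_zero c z

lemma pairIdx_inj {l m : ℕ} {i i' : Fin l} {j j' : Fin m}
    (h : pairIdx i j = pairIdx i' j') : i = i' ∧ j = j' := by
  have hval : i.val * m + j.val = i'.val * m + j'.val := congrArg Fin.val h
  have hj := j.isLt
  have hj' := j'.isLt
  have hii : i.val = i'.val := by
    rcases Nat.lt_trichotomy i.val i'.val with hlt | heq | hgt
    · exfalso
      have h2 : (i.val + 1) * m ≤ i'.val * m := Nat.mul_le_mul_right m hlt
      have h3 : (i.val + 1) * m = i.val * m + m := by ring
      omega
    · exact heq
    · exfalso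
      have h2 : (i'.val + 1) * m ≤ i.val * m := Nat.mul_le_mul_right m hgt
      have h3 : (i'.val + 1) * m = i'.val * m + m := by ring
      omega
  have hmm : i.val * m = i'.val * m := by rw [hii]
  refine ⟨Fin.ext hii, Fin.ext ?_⟩
  omega

end SinkAux

open SinkAux in
/-- Abelian factors below `k`, sinks from `k` on:
`Proj_{{0,…,k-1}} R × {s_k} × ⋯ × {s_{n-1}} ⊆ R`. -/
theorem abelian_sink_subset
    {σ : Signature} {n : ℕ} {A : Fin n → Type} [∀ i, Finite (A i)]
    (Alg : ∀ i, UAlgebra σ (A i))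
    (hidem : ∀ i, (Alg i).Idempotent)
    {nt : ℕ} (t : UTerm σ nt) (ht : IsTaylorFamily Alg t)
    (k : ℕ) (hk0 : 0 < k) (hkn : k < n)
    (habel : ∀ i : Fin n, i.val < k → (Alg i).Abelian)
    (s : ∀ i, A i) (hsink : ∀ i : Fin n, k ≤ i.val → IsSink (Alg i) (s i))
    (R : Set (∀ i, A i)) (hR : IsSubdirect Alg R) :
    ∀ x : ∀ i, A i,
      (∃ r ∈ R, ∀ i : Fin n, i.val < k → r i = x i) →
      (∀ i : Fin n, k ≤ i.val → x i = s i) → x ∈ R := by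
  classical
  obtain ⟨u, v, huv, hTay⟩ := ht
  intro x hx hxs
  obtain ⟨r, hrR, hrx⟩ := hx
  by_cases hnon : ∃ ℓ : Fin n, k ≤ ℓ.val ∧ ∃ a b : A ℓ, a ≠ b
  case neg =>
    push_neg at hnon
    have hxr : x = r := by
      funext i
      rcases Nat.lt_or_ge i.val k with h | h
      · exact (hrx i h).symm
      · exact hnon i h (x i) (r i)
    rw [hxr]; exact hrR
  case pos =>
  obtain ⟨ℓ₀, hℓ₀k, a₀, b₀, hab₀⟩ := hnon
  -- choose, for each (relevant) coordinate, two distinct positions t depends on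
  have hchoice : ∀ ℓ : Fin n, ∃ pp : Fin nt × Fin nt,
      k ≤ ℓ.val → (∃ a b : A ℓ, a ≠ b) →
        pp.1 ≠ pp.2 ∧ TermDependsOn (Alg ℓ) t pp.1 ∧ TermDependsOn (Alg ℓ) t pp.2 := by
    intro ℓ
    by_cases hℓ : k ≤ ℓ.val ∧ ∃ a b : A ℓ, a ≠ b
    · obtain ⟨hℓ1, a, b, hab⟩ := hℓ
      obtain ⟨pp, qq, hne, h1, h2⟩ := exists_two_deps (Alg ℓ) t (hTay ℓ).1 u v huv
        (fun i xx yy => (hTay ℓ).2 i xx yy) hab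
      exact ⟨(pp, qq), fun _ _ => ⟨hne, h1, h2⟩⟩
    · obtain ⟨pp, qq, hne, h1, h2⟩ := exists_two_deps (Alg ℓ₀) t (hTay ℓ₀).1 u v huv
        (fun i xx yy => (hTay ℓ₀).2 i xx yy) hab₀
      exact ⟨(pp, qq), fun hh1 hh2 => absurd ⟨hh1, hh2⟩ hℓ⟩
  choose pq hpq using hchoice
  -- the indicator of the "diagonal" positions
  obtain ⟨χ, hχT, hχF⟩ : ∃ χ : Fin (nt * nt) → Bool,
      (∀ ℓ : Fin n, k ≤ ℓ.val → (∃ a b : A ℓ, a ≠ b) →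
        χ (pairIdx (pq ℓ).1 (pq ℓ).1) = true) ∧
      (∀ ℓ : Fin n, k ≤ ℓ.val → (∃ a b : A ℓ, a ≠ b) →
        χ (pairIdx (pq ℓ).1 (pq ℓ).2) = false) := by
    refine ⟨fun pos => decide (∃ ℓ : Fin n, k ≤ ℓ.val ∧ (∃ a b : A ℓ, a ≠ b) ∧
      pos = pairIdx (pq ℓ).1 (pq ℓ).1), ?_, ?_⟩
    · intro ℓ h1 h2
      simp only [decide_eq_true_eq]
      exact ⟨ℓ, h1, h2, rfl⟩
    · intro ℓ h1 h2
      simp only [decide_eq_false_iff_not]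
      rintro ⟨ℓ', h1', h2', heq⟩
      obtain ⟨hi, hj⟩ := pairIdx_inj heq
      exact (hpq ℓ h1 h2).1 (hi.trans hj.symm)
  -- the forcing lemma
  have force : ∀ (q q' : Fin n → Fin nt),
      (∀ ℓ : Fin n, k ≤ ℓ.val → (∃ a b : A ℓ, a ≠ b) →
        TermDependsOn (Alg ℓ) t (q ℓ) ∧ TermDependsOn (Alg ℓ) t (q' ℓ)) →
      ∀ env : Fin (nt * nt) → (∀ i, A i), (∀ pos, env pos ∈ R) →
      (∀ ℓ : Fin n, k ≤ ℓ.val → (∃ a b : A ℓ, a ≠ b) →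
        env (pairIdx (q ℓ) (q' ℓ)) ℓ = s ℓ) →
      ((prodAlgebra Alg).eval (starTerm t t) env ∈ R ∧
        ∀ ℓ : Fin n, k ≤ ℓ.val → (prodAlgebra Alg).eval (starTerm t t) env ℓ = s ℓ) := by
    intro q q' hq env henvR henvs
    refine ⟨eval_mem _ hR.2.1 _ _ henvR, ?_⟩
    intro ℓ hkℓ
    by_cases hnt2 : ∃ a b : A ℓ, a ≠ b
    · have hTeval : (prodAlgebra Alg).eval (starTerm t t) env ℓ =
          (Alg ℓ).eval t (fun i => (Alg ℓ).eval t (fun j => env (pairIdx i j) ℓ)) := by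
        rw [prod_eval]
        show (Alg ℓ).eval (UTerm.bind t _) _ = _
        rw [eval_bind]
        congr 1
        funext i
        rw [eval_bind]
        rfl
      rw [hTeval]
      refine sink_eval (Alg ℓ) (hsink ℓ hkℓ) t (hq ℓ hkℓ hnt2).1 _ ?_
      refine sink_eval (Alg ℓ) (hsink ℓ hkℓ) t (hq ℓ hkℓ hnt2).2 _ ?_
      exact henvs ℓ hkℓ hnt2
    · push_neg at hnt2
      exact hnt2 _ _
  -- Step A : an element of R that is `s` on all sink coordinates
  have hdex : ∃ d, d ∈ R ∧ ∀ ℓ : Fin n, k ≤ ℓ.val → d ℓ = s ℓ := by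
    have main : ∀ m : ℕ, ∃ e, e ∈ R ∧ ∀ ℓ : Fin n, k ≤ ℓ.val → ℓ.val < m → e ℓ = s ℓ := by
      intro m
      induction m with
      | zero =>
        obtain ⟨e, he⟩ := hR.1
        exact ⟨e, he, fun ℓ _ h => absurd h (Nat.not_lt_zero _)⟩
      | succ m ih =>
        obtain ⟨e, heR, hes⟩ := ih
        by_cases hmn : m < n
        case neg =>
          exact ⟨e, heR, fun ℓ h1 h2 => hes ℓ h1 (by have := ℓ.isLt; omega)⟩
        case pos =>
        by_cases hkm : k ≤ m
        case neg => exact ⟨e, heR, fun ℓ h1 h2 => hes ℓ h1 (by omega)⟩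
        case pos =>
        by_cases hnt2 : ∃ a b : A ⟨m, hmn⟩, a ≠ b
        case neg =>
          push_neg at hnt2
          refine ⟨e, heR, fun ℓ h1 h2 => ?_⟩
          rcases Nat.lt_or_ge ℓ.val m with h | h
          · exact hes ℓ h1 h
          · have hℓm : ℓ = ⟨m, hmn⟩ := Fin.ext (show ℓ.val = m by omega)
            subst hℓm
            exact hnt2 _ _
        case pos =>
          obtain ⟨w, hwR, hwm⟩ := hR.2.2 ⟨m, hmn⟩ (s ⟨m, hmn⟩)
          refine ⟨(prodAlgebra Alg).eval t (fun j => if j = (pq ⟨m, hmn⟩).1 then w else e),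
            eval_mem _ hR.2.1 _ _
              (fun j => by by_cases h : j = (pq ⟨m, hmn⟩).1 <;> simp [h, hwR, heR]), ?_⟩
          intro ℓ h1 h2
          have hcoord : (prodAlgebra Alg).eval t
                (fun j => if j = (pq ⟨m, hmn⟩).1 then w else e) ℓ =
              (Alg ℓ).eval t (fun j => if j = (pq ⟨m, hmn⟩).1 then w ℓ else e ℓ) := by
            rw [prod_eval]
            congr 1
            funext j
            by_cases h : j = (pq ⟨m, hmn⟩).1 <;> simp [h]
          rw [hcoord]
          rcases Nat.lt_or_ge ℓ.val m with hlt | hge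
          · by_cases hnt3 : ∃ a b : A ℓ, a ≠ b
            · have hPP := hpq ℓ h1 hnt3
              by_cases hj : (pq ℓ).1 = (pq ⟨m, hmn⟩).1
              · refine sink_eval (Alg ℓ) (hsink ℓ h1) t hPP.2.2 _ ?_
                rw [if_neg (show (pq ℓ).2 ≠ (pq ⟨m, hmn⟩).1 from by
                  rw [← hj]; exact fun hc => hPP.1 hc.symm)]
                exact hes ℓ h1 hlt
              · refine sink_eval (Alg ℓ) (hsink ℓ h1) t hPP.2.1 _ ?_
                rw [if_neg hj]
                exact hes ℓ h1 hlt
            · push_neg at hnt3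
              exact hnt3 _ _
          · have hℓm : ℓ = ⟨m, hmn⟩ := Fin.ext (show ℓ.val = m by omega)
            subst hℓm
            refine sink_eval (Alg _) (hsink _ h1) t (hpq _ h1 hnt2).2.1 _ ?_
            rw [if_pos rfl]
            exact hwm
    obtain ⟨e, heR, hes⟩ := main n
    exact ⟨e, heR, fun ℓ h1 => hes ℓ h1 ℓ.isLt⟩
  obtain ⟨d, hdR, hds⟩ := hdex
  -- the iteration map
  set F : (∀ i, A i) → (∀ i, A i) → (∀ i, A i) :=
    fun c z => (prodAlgebra Alg).eval (starTerm t t) (fun pos => if χ pos then z else c)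
    with hF
  have hFR : ∀ c z, c ∈ R → z ∈ R → F c z ∈ R := by
    intro c z hc hz
    apply eval_mem _ hR.2.1
    intro pos
    cases h : χ pos
    · simpa [h] using hc
    · simpa [h] using hz
  have hFcoord : ∀ c z (i : Fin n), F c z i =
      (Alg i).eval (starTerm t t) (fun pos => if χ pos then z i else c i) := by
    intro c z i
    show (prodAlgebra Alg).eval (starTerm t t) (fun pos => if χ pos then z else c) i = _
    rw [prod_eval]
    congr 1
    funext pos
    cases h : χ pos <;> simp [h]
  have hFD' : ∀ c z, (c ∈ R ∧ ∀ ℓ : Fin n, k ≤ ℓ.val → c ℓ = s ℓ) → z ∈ R →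
      (F c z ∈ R ∧ ∀ ℓ : Fin n, k ≤ ℓ.val → F c z ℓ = s ℓ) := by
    intro c z hc hz
    refine force (fun ℓ => (pq ℓ).1) (fun ℓ => (pq ℓ).2)
      (fun ℓ h1 h2 => ⟨(hpq ℓ h1 h2).2.1, (hpq ℓ h1 h2).2.2⟩) _ ?_ ?_
    · intro pos
      cases h : χ pos
      · simpa [h] using hc.1
      · simpa [h] using hz
    · intro ℓ h1 h2
      show (if χ (pairIdx (pq ℓ).1 (pq ℓ).2) then z else c) ℓ = s ℓ
      rw [hχF ℓ h1 h2]
      simpa using hc.2 ℓ h1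
  have hFD : ∀ c z, c ∈ R → (z ∈ R ∧ ∀ ℓ : Fin n, k ≤ ℓ.val → z ℓ = s ℓ) →
      (F c z ∈ R ∧ ∀ ℓ : Fin n, k ≤ ℓ.val → F c z ℓ = s ℓ) := by
    intro c z hc hz
    refine force (fun ℓ => (pq ℓ).1) (fun ℓ => (pq ℓ).1)
      (fun ℓ h1 h2 => ⟨(hpq ℓ h1 h2).2.1, (hpq ℓ h1 h2).2.1⟩) _ ?_ ?_
    · intro pos
      cases h : χ pos
      · simpa [h] using hc
      · simpa [h] using hz.1
    · intro ℓ h1 h2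
      show (if χ (pairIdx (pq ℓ).1 (pq ℓ).1) then z else c) ℓ = s ℓ
      rw [hχT ℓ h1 h2]
      simpa using hz.2 ℓ h1
  obtain ⟨N, hN0, hNidem⟩ := exists_idempotent_iterate (F d)
  have hiterR : ∀ m (z : ∀ i, A i), z ∈ R → (F d)^[m] z ∈ R := by
    intro m
    induction m with
    | zero => exact fun z hz => hz
    | succ m ih =>
      intro z hz
      rw [Function.iterate_succ_apply']
      exact hFR d _ hdR (ih z hz)
  have hyD : (F d)^[N] r ∈ R ∧ ∀ ℓ : Fin n, k ≤ ℓ.val → (F d)^[N] r ℓ = s ℓ := by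
    obtain ⟨N', rfl⟩ : ∃ N', N = N' + 1 := ⟨N - 1, by omega⟩
    rw [Function.iterate_succ_apply']
    exact hFD' d _ ⟨hdR, hds⟩ (hiterR N' r hrR)
  have hcoord_iter : ∀ (c : ∀ i, A i) (m : ℕ) (z : ∀ i, A i) (i : Fin n),
      ((F c)^[m] z) i =
        (fun z' => (Alg i).eval (starTerm t t)
          (fun pos => if χ pos then z' else c i))^[m] (z i) := by
    intro c m z i
    induction m with
    | zero => rfl
    | succ m ih =>
      rw [Function.iterate_succ_apply', Function.iterate_succ_apply', ← ih]
      exact hFcoord c _ i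
  have key : ∀ i : Fin n, i.val < k →
      (Alg i).eval (QTerm (starTerm t t) χ N)
        (Fin.append (fun _ : Fin 1 => r i) (fun _ : Fin 1 => r i)) =
      (Alg i).eval (QTerm (starTerm t t) χ N)
        (Fin.append (fun _ : Fin 1 => r i) (fun _ : Fin 1 => ((F d)^[N] r) i)) := by
    intro i hik
    have h1 : (Alg i).eval (QTerm (starTerm t t) χ N)
        (Fin.append (fun _ : Fin 1 => d i) (fun _ : Fin 1 => r i)) =
        (Alg i).eval (QTerm (starTerm t t) χ N)
        (Fin.append (fun _ : Fin 1 => d i) (fun _ : Fin 1 => ((F d)^[N] r) i)) := by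
      rw [eval_QTerm, eval_QTerm, ← hcoord_iter d N r i,
        ← hcoord_iter d N ((F d)^[N] r) i, hNidem r]
    exact ((habel i hik) 1 1 (QTerm (starTerm t t) χ N)
      (fun _ => d i) (fun _ => r i) (fun _ => r i) (fun _ => ((F d)^[N] r) i)).mp h1
  have hGD : ∀ m : ℕ, (F r)^[m] ((F d)^[N] r) ∈ R ∧
      ∀ ℓ : Fin n, k ≤ ℓ.val → (F r)^[m] ((F d)^[N] r) ℓ = s ℓ := by
    intro m
    induction m with
    | zero => exact hyD
    | succ m ih =>
      rw [Function.iterate_succ_apply']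
      exact hFD r _ hrR ih
  have hGlow : ∀ i : Fin n, i.val < k → (F r)^[N] ((F d)^[N] r) i = r i := by
    intro i hik
    have h2 := key i hik
    have h3 : (Alg i).eval (QTerm (starTerm t t) χ N)
        (Fin.append (fun _ : Fin 1 => r i) (fun _ : Fin 1 => r i)) = r i := by
      rw [eval_QTerm]
      have hfix : (Alg i).eval (starTerm t t)
          (fun pos => if χ pos then r i else r i) = r i := by
        rw [show (fun pos : Fin (nt*nt) => if χ pos then r i else r i) = (fun _ => r i) from
          funext fun pos => ite_self _]
        exact eval_diag _ (hidem i) _ (r i)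
      exact Function.iterate_fixed hfix N
    have h4 : (Alg i).eval (QTerm (starTerm t t) χ N)
        (Fin.append (fun _ : Fin 1 => r i) (fun _ : Fin 1 => ((F d)^[N] r) i)) =
        (F r)^[N] ((F d)^[N] r) i := by
      rw [eval_QTerm, ← hcoord_iter r N ((F d)^[N] r) i]
    rw [← h4, ← h2, h3]
  have hxG : x = (F r)^[N] ((F d)^[N] r) := by
    funext i
    rcases Nat.lt_or_ge i.val k with h | h
    · rw [hGlow i h]
      exact (hrx i h).symm
    · rw [hxs i h]
      exact ((hGD N).2 i h).symm
  rw [hxG]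
  exact (hGD N).1
end

section
/- Let α_0, α_1, β be congruences of an algebra A and suppose α_0 ∧ β = δ = α_1 ∧ β for some congruence δ. Then C(α_0 ∨ α_1, β; δ). If, in addition, β ≤ α_0 ∨ α_1, then C(β, β; δ); consequently β/δ is an abelian congruence of A/δ, i.e. C(β/δ, β/δ; 0) holds in A/δ. -/
section AuxCM

variable {σ : Signature} {A : Type}

lemma eval_var_cm (Alg : UAlgebra σ A) {n : ℕ} (i : Fin n) (env : Fin n → A) :
    Alg.eval (UTerm.var i) env = env i := rfl

lemma eval_app_cm (Alg : UAlgebra σ A) {n : ℕ} (f : σ.ops)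
    (ts : Fin (σ.arity f) → UTerm σ n) (env : Fin n → A) :
    Alg.eval (UTerm.app f ts) env = Alg.interp f (fun j => Alg.eval (ts j) env) := rfl

lemma eval_bind_cm (Alg : UAlgebra σ A) {n k : ℕ} (t : UTerm σ n)
    (s : Fin n → UTerm σ k) (env : Fin k → A) :
    Alg.eval (t.bind s) env = Alg.eval t (fun i => Alg.eval (s i) env) := by
  induction t with
  | var i => rfl
  | app f ts ih =>
    show Alg.interp f _ = Alg.interp f _
    exact congrArg _ (funext fun j => ih j)

lemma eval_cong_cm (Alg : UAlgebra σ A) {θ : A → A → Prop} (h : Alg.IsCong θ)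
    {n : ℕ} (t : UTerm σ n) {c d : Fin n → A} (hcd : ∀ i, θ (c i) (d i)) :
    θ (Alg.eval t c) (Alg.eval t d) := by
  induction t with
  | var i => exact hcd i
  | app f ts ih => exact h.2.2.2 f _ _ (fun j => ih j)

lemma append_rel_cm {θ : A → A → Prop} {ℓ m : ℕ} {p p' : Fin ℓ → A}
    {w w' : Fin m → A} (hp : ∀ i, θ (p i) (p' i)) (hw : ∀ i, θ (w i) (w' i)) :
    ∀ r, θ (Fin.append p w r) (Fin.append p' w' r) := by
  intro r
  refine Fin.addCases (fun q => ?_) (fun q => ?_) r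
  · rw [Fin.append_left, Fin.append_left]; exact hp q
  · rw [Fin.append_right, Fin.append_right]; exact hw q

/-- Generic one-coordinate-at-a-time chain lemma. -/
lemma chain_iff_cm {ℓ : ℕ} (P : (Fin ℓ → A) → Prop) (a b : Fin ℓ → A)
    (step : ∀ (s : Fin ℓ) (c c' : Fin ℓ → A), (∀ i, i ≠ s → c i = c' i) →
      c s = a s → c' s = b s → (P c ↔ P c')) : P a ↔ P b := by
  classical
  set cs : ℕ → Fin ℓ → A := fun s i => if i.val < s then b i else a i with hcs
  have h0 : cs 0 = a := by funext i; simp [hcs]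
  have hl : cs ℓ = b := by funext i; simp [hcs, i.isLt]
  have hstep : ∀ s, s < ℓ → (P (cs s) ↔ P (cs (s + 1))) := by
    intro s hs
    refine step ⟨s, hs⟩ _ _ ?_ ?_ ?_
    · intro i hi
      have hne : i.val ≠ s := fun h => hi (Fin.ext h)
      simp only [hcs]
      by_cases h : i.val < s
      · simp [h, Nat.lt_succ_of_lt h]
      · have h2 : ¬ i.val < s + 1 := by omega
        simp [h, h2]
    · simp [hcs]
    · simp [hcs]
  have main : ∀ s, s ≤ ℓ → (P a ↔ P (cs s)) := by
    intro s
    induction s with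
    | zero => intro _; rw [h0]
    | succ n ih => intro h; exact (ih (by omega)).trans (hstep n (by omega))
  rw [← hl]
  exact main ℓ le_rfl

/-- The auxiliary "centralizer" relation. -/
def Zrel (Alg : UAlgebra σ A) (β δ : A → A → Prop) (x y : A) : Prop :=
  ∀ (ℓ m : ℕ) (t : UTerm σ (ℓ + m)) (a b : Fin ℓ → A) (u v : Fin m → A),
    (∀ i, (a i = x ∧ b i = y) ∨ a i = b i) → (∀ i, β (u i) (v i)) →
    (δ (Alg.eval t (Fin.append a u)) (Alg.eval t (Fin.append a v)) ↔
      δ (Alg.eval t (Fin.append b u)) (Alg.eval t (Fin.append b v)))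

lemma subst_step_cm (Alg : UAlgebra σ A) {β δ : A → A → Prop}
    (hβr : ∀ a, β a a) {x' y' : A} (hZ : Zrel Alg β δ x' y')
    {ℓ m : ℕ} (t : UTerm σ (ℓ + m)) (i : Fin ℓ) (f : σ.ops) (j : Fin (σ.arity f))
    (e e' : Fin (σ.arity f) → A) (c : Fin ℓ → A) (u v : Fin m → A)
    (hee : ∀ j', j' ≠ j → e j' = e' j') (hej : e j = x') (hej' : e' j = y')
    (huv : ∀ r, β (u r) (v r)) :
    (δ (Alg.eval t (Fin.append (fun q => if q = i then Alg.interp f e else c q) u))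
       (Alg.eval t (Fin.append (fun q => if q = i then Alg.interp f e else c q) v)) ↔
     δ (Alg.eval t (Fin.append (fun q => if q = i then Alg.interp f e' else c q) u))
       (Alg.eval t (Fin.append (fun q => if q = i then Alg.interp f e' else c q) v))) := by
  classical
  have h0b : (0 : ℕ) < 1 + (σ.arity f + (ℓ + m)) := by omega
  have hkb : ∀ j' : Fin (σ.arity f), 1 + (j' : ℕ) < 1 + (σ.arity f + (ℓ + m)) := by
    intro j'; have := j'.isLt; omega
  have hrb : ∀ p : Fin (ℓ + m), 1 + σ.arity f + (p : ℕ) < 1 + (σ.arity f + (ℓ + m)) := by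
    intro p; have := p.isLt; omega
  set s : Fin (ℓ + m) → UTerm σ (1 + (σ.arity f + (ℓ + m))) := fun p =>
    if (p : ℕ) = (i : ℕ) then
      UTerm.app f (fun j' => if j' = j then UTerm.var ⟨0, h0b⟩
        else UTerm.var ⟨1 + (j' : ℕ), hkb j'⟩)
    else UTerm.var ⟨1 + σ.arity f + (p : ℕ), hrb p⟩ with hs
  have key : ∀ (z : A) (w : Fin m → A),
      Alg.eval (t.bind s)
        (Fin.append (fun _ : Fin 1 => z) (Fin.append e (Fin.append c w)))
      = Alg.eval t
          (Fin.append (fun q => if q = i then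
             Alg.interp f (fun j' => if j' = j then z else e j') else c q) w) := by
    intro z w
    rw [eval_bind_cm]
    apply congrArg
    funext p
    set E := Fin.append (fun _ : Fin 1 => z) (Fin.append e (Fin.append c w)) with hE
    have E0 : E ⟨0, h0b⟩ = z := by
      have h : (⟨0, h0b⟩ : Fin (1 + (σ.arity f + (ℓ + m))))
          = Fin.castAdd (σ.arity f + (ℓ + m)) (0 : Fin 1) := rfl
      rw [hE, h, Fin.append_left]
    have EK : ∀ j' : Fin (σ.arity f), E ⟨1 + (j' : ℕ), hkb j'⟩ = e j' := by
      intro j'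
      have h : (⟨1 + (j' : ℕ), hkb j'⟩ : Fin (1 + (σ.arity f + (ℓ + m))))
          = Fin.natAdd 1 (Fin.castAdd (ℓ + m) j') := rfl
      rw [hE, h, Fin.append_right, Fin.append_left]
    have ER : ∀ p : Fin (ℓ + m), E ⟨1 + σ.arity f + (p : ℕ), hrb p⟩ = Fin.append c w p := by
      intro p
      have h : (⟨1 + σ.arity f + (p : ℕ), hrb p⟩ : Fin (1 + (σ.arity f + (ℓ + m))))
          = Fin.natAdd 1 (Fin.natAdd (σ.arity f) p) := by
        apply Fin.ext
        simp [Fin.natAdd]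
        omega
      rw [hE, h, Fin.append_right, Fin.append_right]
    refine Fin.addCases (fun q => ?_) (fun q => ?_) p
    · -- left block
      rw [Fin.append_left]
      by_cases hq : q = i
      · subst hq
        have hcond : ((Fin.castAdd m q : Fin (ℓ + m)) : ℕ) = (q : ℕ) := rfl
        have hsq : s (Fin.castAdd m q)
            = UTerm.app f (fun j' => if j' = j then UTerm.var ⟨0, h0b⟩
                else UTerm.var ⟨1 + (j' : ℕ), hkb j'⟩) := by
          rw [hs]
          simp [hcond]
        rw [hsq, eval_app_cm, if_pos rfl]
        apply congrArg
        funext j'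
        by_cases hj : j' = j
        · subst hj; rw [if_pos rfl, if_pos rfl, eval_var_cm, E0]
        · rw [if_neg hj, if_neg hj, eval_var_cm, EK j']
      · have hcond : ¬ ((q : Fin ℓ) : ℕ) = (i : ℕ) := by
          intro h; exact hq (Fin.ext h)
        have hsq : s (Fin.castAdd m q)
            = UTerm.var ⟨1 + σ.arity f + ((Fin.castAdd m q : Fin (ℓ + m)) : ℕ),
                hrb (Fin.castAdd m q)⟩ := by
          rw [hs]; simp [hcond]
        rw [hsq, eval_var_cm, ER, Fin.append_left, if_neg hq]
    · -- right block
      rw [Fin.append_right]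
      have hcond : ¬ (ℓ + ((q : Fin m) : ℕ) = (i : ℕ)) := by
        have h2 := i.isLt
        omega
      have hsq : s (Fin.natAdd ℓ q)
          = UTerm.var ⟨1 + σ.arity f + ((Fin.natAdd ℓ q : Fin (ℓ + m)) : ℕ),
              hrb (Fin.natAdd ℓ q)⟩ := by
        rw [hs]; simp [hcond]
      rw [hsq, eval_var_cm, ER, Fin.append_right]
  have he1 : (fun j' => if j' = j then x' else e j') = e := by
    funext j'
    by_cases hj : j' = j
    · subst hj; rw [if_pos rfl]; exact hej.symm
    · rw [if_neg hj]
  have he2 : (fun j' => if j' = j then y' else e j') = e' := by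
    funext j'
    by_cases hj : j' = j
    · subst hj; rw [if_pos rfl]; exact hej'.symm
    · rw [if_neg hj]; exact hee j' hj
  have hβcomp : ∀ r, β (Fin.append e (Fin.append c u) r)
      (Fin.append e (Fin.append c v) r) :=
    append_rel_cm (fun _ => hβr _) (append_rel_cm (fun _ => hβr _) huv)
  have H := hZ 1 (σ.arity f + (ℓ + m)) (t.bind s) (fun _ => x') (fun _ => y')
    (Fin.append e (Fin.append c u)) (Fin.append e (Fin.append c v))
    (fun _ => Or.inl ⟨rfl, rfl⟩) hβcomp
  rw [key x' u, key x' v, key y' u, key y' v, he1, he2] at H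
  exact H

lemma Zrel_isCong (Alg : UAlgebra σ A) {β δ : A → A → Prop}
    (hβr : ∀ a, β a a) : Alg.IsCong (Zrel Alg β δ) := by
  classical
  refine ⟨?_, ?_, ?_, ?_⟩
  · -- refl
    intro x ℓ m t a b u v hab _
    have hab' : a = b := funext fun i => (hab i).elim (fun h => h.1.trans h.2.symm) id
    rw [hab']
  · -- symm
    intro x y hxy ℓ m t a b u v hab huv
    exact (hxy ℓ m t b a u v
      (fun i => (hab i).elim (fun h => Or.inl ⟨h.2, h.1⟩) (fun h => Or.inr h.symm))
      huv).symm
  · -- trans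
    intro x y z hxy hyz ℓ m t a b u v hab huv
    set c : Fin ℓ → A := fun i => if a i = b i then a i else y with hc
    have h1 : ∀ i, (a i = x ∧ c i = y) ∨ a i = c i := by
      intro i
      by_cases h : a i = b i
      · right; simp [hc, h]
      · rcases hab i with h' | h'
        · left; exact ⟨h'.1, by simp [hc, h]⟩
        · exact absurd h' h
    have h2 : ∀ i, (c i = y ∧ b i = z) ∨ c i = b i := by
      intro i
      by_cases h : a i = b i
      · right; simp [hc, h]
      · rcases hab i with h' | h'
        · left; exact ⟨by simp [hc, h], h'.2⟩
        · exact absurd h' h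
    exact (hxy ℓ m t a c u v h1 huv).trans (hyz ℓ m t c b u v h2 huv)
  · -- compat
    intro f x y hxy ℓ m t a b u v hab huv
    refine chain_iff_cm
      (fun c => δ (Alg.eval t (Fin.append c u)) (Alg.eval t (Fin.append c v))) a b ?_
    intro sI c c' hne hca hcb
    rcases hab sI with hp | hp
    · -- a sI = f x, b sI = f y : inner chain over the arguments of f
      have inner := chain_iff_cm
        (fun e => δ (Alg.eval t (Fin.append (fun q => if q = sI then Alg.interp f e else c q) u))
          (Alg.eval t (Fin.append (fun q => if q = sI then Alg.interp f e else c q) v)))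
        x y
        (fun j e e' hne' hej hej' =>
          subst_step_cm Alg hβr (hxy j) t sI f j e e' c u v hne' hej hej' huv)
      have hgx : (fun q => if q = sI then Alg.interp f x else c q) = c := by
        funext q
        by_cases h : q = sI
        · subst h; rw [if_pos rfl, ← hp.1, ← hca]
        · rw [if_neg h]
      have hgy : (fun q => if q = sI then Alg.interp f y else c q) = c' := by
        funext q
        by_cases h : q = sI
        · subst h; rw [if_pos rfl, ← hp.2, ← hcb]
        · rw [if_neg h]; exact hne q h
      show δ (Alg.eval t (Fin.append c u)) (Alg.eval t (Fin.append c v)) ↔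
        δ (Alg.eval t (Fin.append c' u)) (Alg.eval t (Fin.append c' v))
      rw [← hgx, ← hgy]
      exact inner
    · -- equal case
      have hcc : c = c' := by
        funext i
        by_cases h : i = sI
        · subst h; rw [hca, hcb, ← hp]
        · exact hne i h
      rw [hcc]

lemma sub_Z_cm (Alg : UAlgebra σ A) {a0 β δ : A → A → Prop}
    (ha0 : Alg.IsCong a0) (hβ : Alg.IsCong β)
    (hm0 : ∀ x y, δ x y ↔ a0 x y ∧ β x y) :
    ∀ x y, a0 x y → Zrel Alg β δ x y := by
  intro x y hxy ℓ m t a b u v hab huv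
  have haib : ∀ i, a0 (a i) (b i) := by
    intro i
    rcases hab i with h | h
    · rw [h.1, h.2]; exact hxy
    · rw [h]; exact ha0.1 _
  have main : ∀ (a b : Fin ℓ → A), (∀ i, a0 (a i) (b i)) →
      δ (Alg.eval t (Fin.append a u)) (Alg.eval t (Fin.append a v)) →
      δ (Alg.eval t (Fin.append b u)) (Alg.eval t (Fin.append b v)) := by
    intro a b hab h
    rw [hm0]
    constructor
    · have h1 : a0 (Alg.eval t (Fin.append b u)) (Alg.eval t (Fin.append a u)) :=
        eval_cong_cm Alg ha0 t (append_rel_cm (fun i => ha0.2.1 _ _ (hab i)) (fun _ => ha0.1 _))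
      have h2 : a0 (Alg.eval t (Fin.append a u)) (Alg.eval t (Fin.append a v)) :=
        ((hm0 _ _).1 h).1
      have h3 : a0 (Alg.eval t (Fin.append a v)) (Alg.eval t (Fin.append b v)) :=
        eval_cong_cm Alg ha0 t (append_rel_cm hab (fun _ => ha0.1 _))
      exact ha0.2.2.1 _ _ _ (ha0.2.2.1 _ _ _ h1 h2) h3
    · exact eval_cong_cm Alg hβ t (append_rel_cm (fun _ => hβ.1 _) huv)
  exact ⟨main a b haib, main b a (fun i => ha0.2.1 _ _ (haib i))⟩

lemma quot_eval_cm (Alg : UAlgebra σ A) {δ : A → A → Prop} (hδ : Alg.IsCong δ)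
    {n : ℕ} (t : UTerm σ n) (env : Fin n → Quotient (congSetoid hδ)) :
    (quotAlgebra Alg (congSetoid hδ)).eval t env
      = Quotient.mk (congSetoid hδ) (Alg.eval t (fun i => (env i).out)) := by
  induction t with
  | var i => exact (Quotient.out_eq (env i)).symm
  | app f ts ih =>
    show Quotient.mk _ (Alg.interp f fun j =>
      ((quotAlgebra Alg (congSetoid hδ)).eval (ts j) env).out) = _
    apply Quotient.sound
    apply hδ.2.2.2
    intro j
    rw [ih j]
    exact Quotient.exact (s := congSetoid hδ)
      (Quotient.out_eq (Quotient.mk (congSetoid hδ)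
        (Alg.eval (ts j) fun i => (env i).out)))

end AuxCM

/-- If `α₀ ∧ β = δ = α₁ ∧ β` then `C(α₀ ∨ α₁, β; δ)`; if moreover
`β ≤ α₀ ∨ α₁`, then `C(β, β; δ)` and `β/δ` is an abelian congruence of `A/δ`. -/
theorem common_meets
    {σ : Signature} {A : Type} (Alg : UAlgebra σ A)
    (a0 a1 β δ : A → A → Prop)
    (ha0 : Alg.IsCong a0) (ha1 : Alg.IsCong a1)
    (hβ : Alg.IsCong β) (hδ : Alg.IsCong δ)
    (hm0 : ∀ x y, δ x y ↔ a0 x y ∧ β x y)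
    (hm1 : ∀ x y, δ x y ↔ a1 x y ∧ β x y) :
    Centralizes Alg (conJoin Alg a0 a1) β δ ∧
    ((∀ x y, β x y → conJoin Alg a0 a1 x y) →
      Centralizes Alg β β δ ∧
      Centralizes (quotAlgebra Alg (congSetoid hδ))
        (quotCong (congSetoid hδ) β) (quotCong (congSetoid hδ) β) Eq) := by
  classical
  have hsub0 := sub_Z_cm Alg ha0 hβ hm0
  have hsub1 := sub_Z_cm Alg ha1 hβ hm1
  have hZcong : Alg.IsCong (Zrel Alg β δ) := Zrel_isCong Alg hβ.1
  have part1 : Centralizes Alg (conJoin Alg a0 a1) β δ := by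
    intro ℓ m t a b u v hab huv
    have hZ : ∀ i, Zrel Alg β δ (a i) (b i) :=
      fun i => hab i (Zrel Alg β δ) hZcong hsub0 hsub1
    refine chain_iff_cm
      (fun c => δ (Alg.eval t (Fin.append c u)) (Alg.eval t (Fin.append c v))) a b ?_
    intro sI c c' hne hca hcb
    refine hZ sI ℓ m t c c' u v ?_ huv
    intro i
    by_cases h : i = sI
    · exact Or.inl ⟨by rw [h]; exact hca, by rw [h]; exact hcb⟩
    · exact Or.inr (hne i h)
  refine ⟨part1, fun hβJ => ?_⟩
  have part2 : Centralizes Alg β β δ := by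
    intro ℓ m t a b u v hab huv
    exact part1 ℓ m t a b u v (fun i => hβJ _ _ (hab i)) huv
  refine ⟨part2, ?_⟩
  intro ℓ m t abar bbar ubar vbar hab huv
  have δβ : ∀ x y, δ x y → β x y := fun x y h => ((hm0 x y).1 h).2
  have hout : ∀ p q : Quotient (congSetoid hδ),
      quotCong (congSetoid hδ) β p q → β p.out q.out := by
    intro p q hpq
    obtain ⟨x, y, hx, hy, hxy⟩ := hpq
    have h1 : δ p.out x := Quotient.exact ((Quotient.out_eq p).trans hx.symm)
    have h2 : δ q.out y := Quotient.exact ((Quotient.out_eq q).trans hy.symm)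
    exact hβ.2.2.1 _ _ _ (δβ _ _ h1)
      (hβ.2.2.1 _ _ _ hxy (hβ.2.1 _ _ (δβ _ _ h2)))
  have H := part2 ℓ m t (fun i => (abar i).out) (fun i => (bbar i).out)
    (fun i => (ubar i).out) (fun i => (vbar i).out)
    (fun i => hout _ _ (hab i)) (fun i => hout _ _ (huv i))
  have hoapp : ∀ {k k' : ℕ} (p : Fin k → Quotient (congSetoid hδ))
      (q : Fin k' → Quotient (congSetoid hδ)),
      (fun i => ((Fin.append p q) i).out)
        = Fin.append (fun i => (p i).out) (fun i => (q i).out) := by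
    intro k k' p q
    funext r
    refine Fin.addCases (fun w => ?_) (fun w => ?_) r
    · rw [Fin.append_left, Fin.append_left]
    · rw [Fin.append_right, Fin.append_right]
  rw [quot_eval_cm Alg hδ, quot_eval_cm Alg hδ, quot_eval_cm Alg hδ,
    quot_eval_cm Alg hδ, hoapp abar ubar, hoapp abar vbar, hoapp bbar ubar,
    hoapp bbar vbar]
  rw [Quotient.eq, Quotient.eq]
  exact H
end

section
/- Let B_i ≤ A_i (0 ≤ i < n) be finite idempotent algebras of a common signature, let B = B_0 × ... × B_{n-1} and A = A_0 × ... × A_{n-1}. If B_i is absorbing in A_i with respect to the term t_i for each i, then B is absorbing in A with respect to the term s := t_0 ⋆ t_1 ⋆ ... ⋆ t_{n-1}; and if moreover each B_i is a minimal absorbing subalgebra of A_i, then B is a minimal absorbing subalgebra of A (with respect to s). -/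
section Aux

variable {σ : Signature} {A : Type} (Alg : UAlgebra σ A)

lemma eval_bind {n m : ℕ} (t : UTerm σ n) (s : Fin n → UTerm σ m) (env : Fin m → A) :
    Alg.eval (t.bind s) env = Alg.eval t (fun i => Alg.eval (s i) env) := by
  induction t with
  | var i => rfl
  | app f ts ih => simp only [UTerm.bind, UAlgebra.eval]; congr 1; funext j; exact ih j

lemma eval_star {l m : ℕ} (f : UTerm σ l) (g : UTerm σ m) (x : Fin (l * m) → A) :
    Alg.eval (starTerm f g) x =
      Alg.eval f (fun i => Alg.eval g (fun j => x (pairIdx i j))) := by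
  rw [starTerm, eval_bind]; congr 1; funext i; exact eval_bind Alg g _ x

lemma eval_mem {B : Set A} (hB : Alg.IsSubuniv B) {n : ℕ} (t : UTerm σ n)
    (env : Fin n → A) (h : ∀ i, env i ∈ B) : Alg.eval t env ∈ B := by
  induction t with
  | var i => exact h i
  | app f ts ih => exact hB f _ (fun j => ih j)

lemma eval_const {n : ℕ} (hidem : Alg.Idempotent) (t : UTerm σ n) (a : A) :
    Alg.eval t (fun _ => a) = a := by
  induction t with
  | var i => rfl
  | app f ts ih =>
    show Alg.interp f (fun j => Alg.eval (ts j) fun _ => a) = a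
    rw [show (fun j => Alg.eval (ts j) fun _ => a) = fun _ => a from funext fun j => ih j]
    exact hidem f a

lemma pairIdx_inj {l m : ℕ} {i i' : Fin l} {j j' : Fin m}
    (h : pairIdx i j = pairIdx i' j') : i = i' ∧ j = j' := by
  have hv : i.val * m + j.val = i'.val * m + j'.val := congrArg Fin.val h
  have hj := j.isLt; have hj' := j'.isLt
  have hi : i.val = i'.val := by
    rcases Nat.lt_trichotomy i.val i'.val with h1 | h1 | h1
    · nlinarith [Nat.succ_le_of_lt h1]
    · exact h1
    · nlinarith [Nat.succ_le_of_lt h1]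
  refine ⟨Fin.ext hi, Fin.ext ?_⟩
  rw [hi] at hv
  omega

lemma pairIdx_surj {l m : ℕ} (jj : Fin (l * m)) :
    ∃ (i : Fin l) (j : Fin m), pairIdx i j = jj := by
  have hlm := jj.isLt
  have hm : 0 < m := Nat.pos_of_ne_zero fun h => by subst h; simp at hlm
  refine ⟨⟨jj.val / m, ?_⟩, ⟨jj.val % m, Nat.mod_lt _ hm⟩, ?_⟩
  · exact (Nat.div_lt_iff_lt_mul hm).2 hlm
  · apply Fin.ext
    show jj.val / m * m + jj.val % m = jj.val
    rw [Nat.mul_comm]; exact Nat.div_add_mod jj.val m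

lemma absorbingWith_star_inner {B : Set A} {l m : ℕ} (f : UTerm σ l) {g : UTerm σ m}
    (hB : Alg.AbsorbingWith B g) : Alg.AbsorbingWith B (starTerm f g) := by
  obtain ⟨hne, hsub, habs⟩ := hB
  refine ⟨hne, hsub, fun jj x hx => ?_⟩
  obtain ⟨i0, j0, hij⟩ := pairIdx_surj jj
  rw [eval_star]
  apply eval_mem Alg hsub
  intro i
  by_cases h : i = i0
  · subst h
    apply habs j0
    intro j' hj'
    apply hx; rw [← hij]; intro he; exact hj' (pairIdx_inj he).2
  · apply eval_mem Alg hsub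
    intro j'
    apply hx; rw [← hij]; intro he; exact h (pairIdx_inj he).1

lemma absorbingWith_star_outer {B : Set A} {l m : ℕ} {f : UTerm σ l} (g : UTerm σ m)
    (hB : Alg.AbsorbingWith B f) : Alg.AbsorbingWith B (starTerm f g) := by
  obtain ⟨hne, hsub, habs⟩ := hB
  refine ⟨hne, hsub, fun jj x hx => ?_⟩
  obtain ⟨i0, j0, hij⟩ := pairIdx_surj jj
  rw [eval_star]
  apply habs i0
  intro i hi
  apply eval_mem Alg hsub
  intro j'
  apply hx; rw [← hij]; intro he; exact hi (pairIdx_inj he).1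

lemma absorbingWith_iterStar {B : Set A} :
    ∀ (qs : List (Σ k, UTerm σ k)) (p : Σ k, UTerm σ k),
      (Alg.AbsorbingWith B p.2 ∨ ∃ q ∈ qs, Alg.AbsorbingWith B q.2) →
      Alg.AbsorbingWith B (iterStar p qs).2
  | [], p, h => by
    rcases h with h | ⟨q, hq, _⟩
    · exact h
    · simp at hq
  | q :: rest, p, h => by
    apply absorbingWith_iterStar rest (sigStar p q)
    rcases h with h | ⟨q', hq', hq'abs⟩
    · exact Or.inl (absorbingWith_star_outer Alg q.2 h)
    · rcases List.mem_cons.1 hq' with rfl | hq'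
      · exact Or.inl (absorbingWith_star_inner Alg p.2 hq'abs)
      · exact Or.inr ⟨q', hq', hq'abs⟩

lemma eval_prod {ι : Type} {AA : ι → Type} (AlgF : ∀ i, UAlgebra σ (AA i)) {n : ℕ}
    (t : UTerm σ n) (x : Fin n → ∀ i, AA i) (i : ι) :
    (prodAlgebra AlgF).eval t x i = (AlgF i).eval t (fun j => x j i) := by
  induction t with
  | var j => rfl
  | app f ts ih =>
    show (AlgF i).interp f (fun j => (prodAlgebra AlgF).eval (ts j) x i) = _
    congr 1; funext j; exact ih j

end Aux

/-- A product of absorbing subalgebras is absorbing with respect to the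
iterated star term, and a product of minimal absorbing subalgebras is a
minimal absorbing subalgebra of the product. -/
theorem star_absorbing_product
    {σ : Signature} {n : ℕ} {A : Fin (n + 1) → Type} [∀ i, Finite (A i)]
    (Alg : ∀ i, UAlgebra σ (A i)) (hidem : ∀ i, (Alg i).Idempotent)
    (B : ∀ i, Set (A i))
    (k : Fin (n + 1) → ℕ) (t : ∀ i, UTerm σ (k i))
    (habs : ∀ i, (Alg i).AbsorbingWith (B i) (t i)) :
    (prodAlgebra Alg).AbsorbingWith {x | ∀ i, x i ∈ B i}
      (iterStar ⟨k 0, t 0⟩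
        ((List.finRange n).map fun i => (⟨k i.succ, t i.succ⟩ : Σ j, UTerm σ j))).2 ∧
    ((∀ i, (Alg i).MinAbsorbing (B i)) →
      (prodAlgebra Alg).MinAbsorbing {x | ∀ i, x i ∈ B i}) := by
  have hcoord : ∀ i, (Alg i).AbsorbingWith (B i)
      (iterStar ⟨k 0, t 0⟩
        ((List.finRange n).map fun i => (⟨k i.succ, t i.succ⟩ : Σ j, UTerm σ j))).2 := by
    intro i
    apply absorbingWith_iterStar
    refine Fin.cases (Or.inl (habs 0)) (fun i' => Or.inr ⟨⟨k i'.succ, t i'.succ⟩, ?_, habs i'.succ⟩) i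
    exact List.mem_map_of_mem (List.mem_finRange i')
  have part1 : (prodAlgebra Alg).AbsorbingWith {x | ∀ i, x i ∈ B i}
      (iterStar ⟨k 0, t 0⟩
        ((List.finRange n).map fun i => (⟨k i.succ, t i.succ⟩ : Σ j, UTerm σ j))).2 := by
    refine ⟨⟨fun i => ((habs i).1).choose, fun i => ((habs i).1).choose_spec⟩, ?_, ?_⟩
    · intro f x hx i
      exact (hcoord i).2.1 f (fun j => x j i) (fun j => hx j i)
    · intro j x hx i
      show _ ∈ B i
      rw [eval_prod]
      exact (hcoord i).2.2 j (fun l => x l i) (fun l hl => hx l hl i)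
  refine ⟨part1, fun hmin => ⟨⟨_, _, part1⟩, fun C hC hCB => ?_⟩⟩
  obtain ⟨m, r, hCne, hCsub, hCabs⟩ := hC
  apply Set.Subset.antisymm hCB
  intro b hb
  have key : ∀ j : ℕ, j ≤ n + 1 → ∃ x ∈ C, ∀ i : Fin (n + 1), i.val < j → x i = b i := by
    intro j
    induction j with
    | zero =>
      intro _
      obtain ⟨x, hx⟩ := hCne
      exact ⟨x, hx, fun i hi => absurd hi (Nat.not_lt_zero _)⟩
    | succ j ih =>
      intro hj
      obtain ⟨x0, hx0C, hx0⟩ := ih (Nat.le_of_succ_le hj)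
      set jF : Fin (n + 1) := ⟨j, hj⟩ with hjF
      set P : Set (A jF) :=
        {a | ∃ x, x ∈ C ∧ (∀ i : Fin (n + 1), i.val < j → x i = b i) ∧ x jF = a} with hP
      have hPB : P ⊆ B jF := by
        rintro a ⟨x, hxC, -, rfl⟩
        exact hCB hxC jF
      have hPabs : (Alg jF).AbsorbingWith P r := by
        refine ⟨⟨x0 jF, x0, hx0C, hx0, rfl⟩, ?_, ?_⟩
        · intro f y hy
          choose xs hxsC hxsb hxsj using hy
          refine ⟨(prodAlgebra Alg).interp f xs, hCsub f xs hxsC, fun i hi => ?_, ?_⟩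
          · show (Alg i).interp f (fun l => xs l i) = b i
            rw [show (fun l => xs l i) = fun _ => b i from funext fun l => hxsb l i hi]
            exact hidem i f (b i)
          · show (Alg jF).interp f (fun l => xs l jF) = (Alg jF).interp f y
            congr 1
            funext l
            exact hxsj l
        · intro j' y hy
          choose xs hxsC hxsb hxsj using hy
          set X : Fin m → ∀ i, A i :=
            fun l => if hl : l = j' then Function.update x0 jF (y j') else xs l hl with hX
          have hXC : ∀ l, l ≠ j' → X l ∈ C := by
            intro l hl
            simp only [hX, dif_neg hl]
            exact hxsC l hl
          have hXb : ∀ l, ∀ i : Fin (n + 1), i.val < j → X l i = b i := by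
            intro l i hi
            have hij : i ≠ jF := by
              intro h
              rw [h] at hi
              exact absurd hi (lt_irrefl j)
            by_cases hl : l = j'
            · simp only [hX, dif_pos hl]
              rw [Function.update_of_ne hij]
              exact hx0 i hi
            · simp only [hX, dif_neg hl]
              exact hxsb l hl i hi
          have hXj : ∀ l, X l jF = y l := by
            intro l
            by_cases hl : l = j'
            · subst hl
              simp only [hX, dif_pos rfl]
              exact Function.update_self jF (y l) x0
            · simp only [hX, dif_neg hl]
              exact hxsj l hl
          have hz : (prodAlgebra Alg).eval r X ∈ C := hCabs j' X hXC
          refine ⟨_, hz, fun i hi => ?_, ?_⟩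
          · rw [eval_prod, show (fun l => X l i) = fun _ => b i from
              funext fun l => hXb l i hi]
            exact eval_const (Alg i) (hidem i) r (b i)
          · rw [eval_prod, show (fun l => X l jF) = y from funext hXj]
      have hPeq : P = B jF := (hmin jF).2 P ⟨m, r, hPabs⟩ hPB
      have hbP : b jF ∈ P := hPeq ▸ hb jF
      obtain ⟨x, hxC, hxb, hxj⟩ := hbP
      refine ⟨x, hxC, fun i hi => ?_⟩
      rcases Nat.lt_succ_iff_lt_or_eq.1 hi with hi | hi
      · exact hxb i hi
      · have hiF : i = jF := Fin.ext hi
        rw [hiF]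
        exact hxj
  obtain ⟨x, hxC, hx⟩ := key (n + 1) le_rfl
  have : x = b := funext fun i => hx i i.isLt
  exact this ▸ hxC
end

section
/- Every finite idempotent abelian algebra is absorption-free; that is, if A is a finite idempotent abelian algebra and B is an absorbing subalgebra of A, then B = A. -/
/-! ### Infrastructure for the proof -/

namespace AbelianAbsorption

open UAlgebra

variable {σ : Signature} {A : Type}

/-- Evaluation of substituted terms. -/
theorem eval_bind (Alg : UAlgebra σ A) {n k : ℕ} (t : UTerm σ n) (s : Fin n → UTerm σ k)
    (env : Fin k → A) : Alg.eval (t.bind s) env = Alg.eval t (fun i => Alg.eval (s i) env) := by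
  induction t with
  | var i => rfl
  | app f ts ih =>
      show Alg.interp f _ = Alg.interp f _
      congr 1
      funext j
      exact ih j

/-- Idempotency for terms: any term evaluated on a constant environment is that constant. -/
theorem eval_const {Alg : UAlgebra σ A} (hidem : Alg.Idempotent) {n : ℕ} (t : UTerm σ n)
    (a : A) : Alg.eval t (fun _ => a) = a := by
  induction t with
  | var i => rfl
  | app f ts ih =>
      show Alg.interp f _ = a
      have : (fun j => Alg.eval (ts j) (fun _ => a)) = (fun _ => a) := funext fun j => ih j
      rw [this]
      exact hidem f a

/-- Subuniverses are closed under all term operations. -/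
theorem eval_mem {Alg : UAlgebra σ A} {B : Set A} (hS : Alg.IsSubuniv B) {n : ℕ}
    (t : UTerm σ n) (env : Fin n → A) (h : ∀ i, env i ∈ B) : Alg.eval t env ∈ B := by
  induction t with
  | var i => exact h i
  | app f ts ih => exact hS f _ (fun j => ih j)

/-- Value of `Fin.append` by cases on the index value. -/
theorem append_val {α : Type*} {m n : ℕ} (a : Fin m → α) (b : Fin n → α) (i : Fin (m + n)) :
    Fin.append a b i =
      if h : i.val < m then a ⟨i.val, h⟩ else b ⟨i.val - m, by omega⟩ := by
  obtain ⟨iv, hiv⟩ := i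
  by_cases h : iv < m
  · rw [dif_pos h]
    have : (⟨iv, hiv⟩ : Fin (m + n)) = Fin.castAdd n ⟨iv, h⟩ := by ext; rfl
    conv_lhs => rw [this]
    rw [Fin.append_left]
  · rw [dif_neg h]
    have : (⟨iv, hiv⟩ : Fin (m + n)) = Fin.natAdd m ⟨iv - m, by omega⟩ := by
      ext; simp; omega
    conv_lhs => rw [this]
    rw [Fin.append_right]


theorem append_one_left {α : Type*} {n : ℕ} (a : Fin 1 → α) (w : Fin n → α) (h : (0:ℕ) < 1 + n) :
    Fin.append a w ⟨0, h⟩ = a 0 := by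
  rw [append_val, dif_pos (by omega : (0:ℕ) < 1)]
  congr 1

theorem append_one_right {α : Type*} {n : ℕ} (a : Fin 1 → α) (w : Fin n → α) (r : Fin n)
    (h : 1 + r.val < 1 + n) : Fin.append a w ⟨1 + r.val, h⟩ = w r := by
  rw [append_val, dif_neg (by omega : ¬ (1 + r.val < 1))]
  congr 1
  ext
  simp

/-- Every self-map of a finite type has an idempotent iterate `h^[M]` with `M ≥ 1`. -/
theorem exists_idem_pow [Finite A] (h : A → A) :
    ∃ M : ℕ, 0 < M ∧ ∀ a, h^[M] (h^[M] a) = h^[M] a := by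
  obtain ⟨i, j, hij, hfij⟩ : ∃ i j : ℕ, i ≠ j ∧ h^[i] = h^[j] := by
    have := Finite.exists_ne_map_eq_of_infinite (fun n : ℕ => h^[n])
    tauto
  -- wlog i < j
  rcases lt_or_gt_of_ne hij with hlt | hlt
  all_goals {
    first
    | (have key : ∃ p q : ℕ, p < q ∧ h^[p] = h^[q] := ⟨i, j, hlt, hfij⟩)
    | (have key : ∃ p q : ℕ, p < q ∧ h^[p] = h^[q] := ⟨j, i, hlt, hfij.symm⟩)
    obtain ⟨p, q, hpq, hf⟩ := key
    set d := q - p with hd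
    have hd1 : 0 < d := by omega
    -- h^[c] = h^[c + d] for all c ≥ p
    have step : ∀ c, p ≤ c → h^[c] = h^[c + d] := by
      intro c hc
      have : c = (c - p) + p := by omega
      rw [this]
      funext a
      rw [Function.iterate_add_apply, hf]
      rw [show (c - p) + p + d = (c-p) + q by omega, Function.iterate_add_apply]
    have steps : ∀ (e : ℕ) (c), p ≤ c → h^[c] = h^[c + e * d] := by
      intro e
      induction e with
      | zero => intro c hc; simp
      | succ e ihe =>
          intro c hc
          rw [step c hc, show c + (e+1) * d = (c + d) + e * d by ring]
          exact ihe (c + d) (by omega)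
    refine ⟨d * (p + 1), by positivity, ?_⟩
    intro a
    have : h^[d * (p+1)] = h^[d * (p+1) + (p+1) * d] := steps (p+1) (d * (p+1)) (by nlinarith)
    calc h^[d*(p+1)] (h^[d*(p+1)] a) = h^[d*(p+1) + d*(p+1)] a := (Function.iterate_add_apply h _ _ a).symm
    _ = h^[d*(p+1)] a := by rw [show d*(p+1) + d*(p+1) = d*(p+1) + (p+1)*d by ring, ← this]
  }

end AbelianAbsorption

namespace AbelianAbsorption

open UAlgebra

variable {σ : Signature} {A : Type}

/-- Remove slot `j`: position of `i` among the other slots. -/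
def rk {K : ℕ} (j i : Fin (K+2)) : Fin (K+1) :=
  if h : i.val < j.val then ⟨i.val, by have := j.isLt; omega⟩
  else ⟨i.val - 1, by have := i.isLt; omega⟩

/-- Inverse of `rk`: the `r`-th slot other than `j`. -/
def unrk {K : ℕ} (j : Fin (K+2)) (r : Fin (K+1)) : Fin (K+2) :=
  if h : r.val < j.val then ⟨r.val, by have := r.isLt; omega⟩
  else ⟨r.val + 1, by have := r.isLt; omega⟩

theorem unrk_ne {K : ℕ} (j : Fin (K+2)) (r : Fin (K+1)) : unrk j r ≠ j := by
  unfold unrk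
  split <;> (intro hc; apply_fun Fin.val at hc; simp at hc; omega)

theorem unrk_rk {K : ℕ} (j i : Fin (K+2)) (h : i ≠ j) : unrk j (rk j i) = i := by
  have hne : i.val ≠ j.val := fun hc => h (Fin.ext hc)
  unfold unrk rk
  split <;> (rename_i h1 <;> simp only [] ) <;> split <;> (rename_i h2) <;> (ext; simp at * <;> omega)

/-- The term `t` with slot `j` pulled out in front, the other `K+1` slots behind. -/
def Tins {K : ℕ} (t : UTerm σ (K+2)) (j : Fin (K+2)) : UTerm σ (1 + (K+1)) :=
  t.bind (fun i => if i = j then .var ⟨0, by omega⟩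
    else .var ⟨1 + (rk j i).val, by have := (rk j i).isLt; omega⟩)

theorem eval_Tins (Alg : UAlgebra σ A) {K : ℕ} (t : UTerm σ (K+2)) (j : Fin (K+2))
    (a : Fin 1 → A) (w : Fin (K+1) → A) :
    Alg.eval (Tins t j) (Fin.append a w) =
      Alg.eval t (fun i => if i = j then a 0 else w (rk j i)) := by
  unfold Tins
  rw [eval_bind]
  congr 1
  funext i
  by_cases h : i = j
  · rw [if_pos h, if_pos h]
    exact append_one_left a w (by omega)
  · rw [if_neg h, if_neg h]
    exact append_one_right a w (rk j i) (by have := (rk j i).isLt; omega)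

/-- The ladder: if all the one-slot-diagonal maps are injective, every tuple evaluates into `B`. -/
theorem ladder [Finite A] (Alg : UAlgebra σ A)
    (hidem : Alg.Idempotent) (hab : Alg.Abelian) (B : Set A)
    {K : ℕ} (t : UTerm σ (K+2)) (b₀ : A) (hb₀ : b₀ ∈ B) (hSub : Alg.IsSubuniv B)
    (hAbs : ∀ (j : Fin (K+2)) (x : Fin (K+2) → A), (∀ i, i ≠ j → x i ∈ B) → Alg.eval t x ∈ B)
    (hinj : ∀ (j : Fin (K+2)) (u : A),
      Function.Injective (fun z => Alg.eval t (fun i => if i = j then u else z))) :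
    ∀ env : Fin (K+2) → A, Alg.eval t env ∈ B := by
  classical
  have main : ∀ (s : ℕ) (env : Fin (K+2) → A),
      (Finset.univ.filter (fun i => env i ∉ B)).card ≤ s → Alg.eval t env ∈ B := by
    intro s
    induction s with
    | zero =>
        intro env hcard
        refine eval_mem hSub t env (fun i => ?_)
        by_contra hmem
        have hi : i ∈ Finset.univ.filter (fun i => env i ∉ B) := by simp [hmem]
        have := Finset.card_pos.mpr ⟨i, hi⟩
        omega
    | succ s ih =>
        intro env hcard
        by_cases hall : ∀ i, env i ∈ B
        · exact eval_mem hSub t env hall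
        push_neg at hall
        obtain ⟨j, hj⟩ := hall
        -- the context: env with slot j replaced by b₀ has ≤ s bad slots
        have henv₀bad : (Finset.univ.filter
            (fun i => (fun i => if i = j then b₀ else env (unrk j (rk j i))) i ∉ B)).card ≤ s := by
          have hsub : Finset.univ.filter
              (fun i => (fun i => if i = j then b₀ else env (unrk j (rk j i))) i ∉ B) ⊆
              (Finset.univ.filter (fun i => env i ∉ B)).erase j := by
            intro i hi
            simp only [Finset.mem_filter, Finset.mem_univ, true_and] at hi
            by_cases h : i = j
            · rw [if_pos h] at hi; exact absurd hb₀ hi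
            · rw [if_neg h, unrk_rk j i h] at hi
              simp [Finset.mem_erase, h, hi]
          have hjmem : j ∈ Finset.univ.filter (fun i => env i ∉ B) := by simp [hj]
          have := Finset.card_le_card hsub
          rw [Finset.card_erase_of_mem hjmem] at this
          omega
        have hv₀ : Alg.eval t (fun i => if i = j then b₀ else env (unrk j (rk j i))) ∈ B :=
          ih _ henv₀bad
        -- choose z with π_{j,b₀} z = that value
        obtain ⟨z, hz⟩ := (Finite.injective_iff_surjective.mp (hinj j b₀))
          (Alg.eval t (fun i => if i = j then b₀ else env (unrk j (rk j i))))
        -- z ∈ B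
        have hzB : z ∈ B := by
          have hmapsto : ∀ β : {a // a ∈ B},
              Alg.eval t (fun i => if i = j then b₀ else β.val) ∈ B := by
            intro β
            refine eval_mem hSub t _ (fun i => ?_)
            by_cases h : i = j
            · rw [if_pos h]; exact hb₀
            · rw [if_neg h]; exact β.2
          let f' : {a // a ∈ B} → {a // a ∈ B} := fun β => ⟨_, hmapsto β⟩
          have hf'inj : Function.Injective f' := by
            intro β β' hββ'
            have := congrArg Subtype.val hββ'
            exact Subtype.ext (hinj j b₀ this)
          obtain ⟨β, hβ⟩ := (Finite.injective_iff_surjective.mp hf'inj) ⟨_, hv₀⟩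
          have hβval : Alg.eval t (fun i => if i = j then b₀ else β.val) =
              Alg.eval t (fun i => if i = j then b₀ else env (unrk j (rk j i))) :=
            congrArg Subtype.val hβ
          have : β.val = z := by
            apply hinj j b₀
            show Alg.eval t (fun i => if i = j then b₀ else β.val) = _
            rw [hβval, ← hz]
          exact this ▸ β.2
        -- abelian transfer from parameter b₀ to parameter (env j)
        have heq1 : Alg.eval (Tins t j) (Fin.append (fun _ => b₀) (fun r => env (unrk j r))) =
            Alg.eval (Tins t j) (Fin.append (fun _ => b₀) (fun _ => z)) := by
          rw [eval_Tins, eval_Tins]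
          exact hz.symm
        have heq2 := (hab 1 (K+1) (Tins t j) (fun _ => b₀) (fun _ => env j)
          (fun r => env (unrk j r)) (fun _ => z)).mp heq1
        rw [eval_Tins, eval_Tins] at heq2
        have hre : (fun i => if i = j then env j else env (unrk j (rk j i))) = env := by
          funext i
          by_cases h : i = j
          · rw [if_pos h, h]
          · rw [if_neg h, unrk_rk j i h]
        rw [hre] at heq2
        rw [heq2]
        refine hAbs j _ (fun i hi => ?_)
        rw [if_neg hi]
        exact hzB
  intro env
  exact main _ env le_rfl

end AbelianAbsorption

namespace AbelianAbsorption

open UAlgebra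

variable {σ : Signature} {A : Type}

/-- `t` with a dummy parameter slot in front. -/
def Tmain {K : ℕ} (t : UTerm σ (K+2)) : UTerm σ (1 + (K+2)) :=
  t.bind (fun i => .var ⟨1 + i.val, by have := i.isLt; omega⟩)

theorem eval_Tmain (Alg : UAlgebra σ A) {K : ℕ} (t : UTerm σ (K+2)) (x : A)
    (v : Fin (K+2) → A) :
    Alg.eval (Tmain t) (Fin.append (fun _ : Fin 1 => x) v) = Alg.eval t v := by
  unfold Tmain
  rw [eval_bind]
  congr 1
  funext i
  exact append_one_right _ v i (by have := i.isLt; omega)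

/-- The unary polynomial `w ↦ t(x,…,x,w,x,…,x)` (parameter at slot `j₀`) as a term. -/
def Thm {K : ℕ} (t : UTerm σ (K+2)) (j₀ : Fin (K+2)) : UTerm σ (1 + 1) :=
  t.bind (fun i => if i = j₀ then .var ⟨0, by omega⟩ else .var ⟨1, by omega⟩)

theorem eval_Thm (Alg : UAlgebra σ A) {K : ℕ} (t : UTerm σ (K+2)) (j₀ : Fin (K+2)) (x w : A) :
    Alg.eval (Thm t j₀) (Fin.append (fun _ : Fin 1 => x) (fun _ : Fin 1 => w)) =
      Alg.eval t (fun i => if i = j₀ then x else w) := by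
  unfold Thm
  rw [eval_bind]
  congr 1
  funext i
  by_cases h : i = j₀
  · rw [if_pos h, if_pos h]
    exact append_one_left _ _ (by omega)
  · rw [if_neg h, if_neg h]
    have h1 : (⟨1, by omega⟩ : Fin (1 + 1)) = ⟨1 + (0 : Fin 1).val, by omega⟩ := by
      ext; simp
    show Fin.append _ _ ⟨1, by omega⟩ = w
    rw [h1]
    exact append_one_right _ _ 0 (by omega)

/-- Iterates of the unary polynomial as terms. -/
def ThIter {K : ℕ} (t : UTerm σ (K+2)) (j₀ : Fin (K+2)) : ℕ → UTerm σ (1 + 1)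
  | 0 => .var ⟨1, by omega⟩
  | m+1 => (Thm t j₀).bind (fun i =>
      if i.val = 0 then .var ⟨0, by omega⟩ else ThIter t j₀ m)

theorem eval_ThIter (Alg : UAlgebra σ A) {K : ℕ} (t : UTerm σ (K+2)) (j₀ : Fin (K+2))
    (x : A) (m : ℕ) (w : A) :
    Alg.eval (ThIter t j₀ m) (Fin.append (fun _ : Fin 1 => x) (fun _ : Fin 1 => w)) =
      (fun w' => Alg.eval t (fun i => if i = j₀ then x else w'))^[m] w := by
  induction m generalizing w with
  | zero =>
      have h1 : (⟨1, by omega⟩ : Fin (1 + 1)) = ⟨1 + (0 : Fin 1).val, by omega⟩ := by ext; simp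
      show Fin.append _ _ ⟨1, by omega⟩ = w
      rw [h1]
      exact append_one_right _ _ 0 (by omega)
  | succ m ihm =>
      show Alg.eval ((Thm t j₀).bind _) _ = _
      rw [eval_bind]
      have harg : (fun i => Alg.eval
            (if i.val = 0 then UTerm.var ⟨0, by omega⟩ else ThIter t j₀ m)
            (Fin.append (fun _ : Fin 1 => x) (fun _ : Fin 1 => w)))
          = Fin.append (fun _ : Fin 1 => x)
              (fun _ : Fin 1 => (fun w' => Alg.eval t (fun i => if i = j₀ then x else w'))^[m] w) := by
        funext i
        by_cases h0 : i.val = 0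
        · rw [if_pos h0]
          have hi : i = ⟨0, by omega⟩ := by ext; simpa using h0
          rw [hi]
          show Fin.append _ _ ⟨0, by omega⟩ = Fin.append _ _ ⟨0, by omega⟩
          rw [append_one_left _ _ (by omega), append_one_left _ _ (by omega)]
        · rw [if_neg h0]
          have hi : i = ⟨1 + (0 : Fin 1).val, by omega⟩ := by
            ext; have := i.isLt; simp; omega
          rw [hi, append_one_right _ _ 0 (by omega)]
          exact ihm w
      rw [harg, eval_Thm]
      exact (Function.iterate_succ_apply'
        (fun w' => Alg.eval t (fun i => if i = j₀ then x else w')) m w).symm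

/-- The composite `e ∘ t` as a term (`e` the `M`-th iterate of the unary polynomial). -/
def Tet {K : ℕ} (t : UTerm σ (K+2)) (j₀ : Fin (K+2)) (M : ℕ) : UTerm σ (1 + (K+2)) :=
  (ThIter t j₀ M).bind (fun i =>
    if i.val = 0 then .var ⟨0, by omega⟩ else Tmain t)

theorem eval_Tet (Alg : UAlgebra σ A) {K : ℕ} (t : UTerm σ (K+2)) (j₀ : Fin (K+2)) (M : ℕ)
    (x : A) (v : Fin (K+2) → A) :
    Alg.eval (Tet t j₀ M) (Fin.append (fun _ : Fin 1 => x) v) =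
      (fun w' => Alg.eval t (fun i => if i = j₀ then x else w'))^[M] (Alg.eval t v) := by
  unfold Tet
  rw [eval_bind]
  have harg : (fun i => Alg.eval
        (if i.val = 0 then UTerm.var ⟨0, by omega⟩ else Tmain t)
        (Fin.append (fun _ : Fin 1 => x) v))
      = Fin.append (fun _ : Fin 1 => x) (fun _ : Fin 1 => Alg.eval t v) := by
    funext i
    by_cases h0 : i.val = 0
    · rw [if_pos h0]
      have hi : i = ⟨0, by omega⟩ := by ext; simpa using h0
      rw [hi]
      show Fin.append _ _ ⟨0, by omega⟩ = Fin.append _ _ ⟨0, by omega⟩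
      rw [append_one_left _ _ (by omega), append_one_left _ _ (by omega)]
    · rw [if_neg h0]
      have hi : i = ⟨1 + (0 : Fin 1).val, by omega⟩ := by
        ext; have := i.isLt; simp; omega
      rw [hi, append_one_right _ _ 0 (by omega)]
      exact eval_Tmain Alg t x v
  rw [harg]
  exact eval_ThIter Alg t j₀ x M (Alg.eval t v)

/-- The one-operation signature used for the smaller algebra in the induction. -/
def sigK (K : ℕ) : Signature := ⟨PUnit, fun _ => K + 2⟩

/-- Flattening of terms over `sigK K` to σ-terms with one parameter slot. -/
def flat {K : ℕ} (t : UTerm σ (K+2)) (j₀ : Fin (K+2)) (M : ℕ) {m : ℕ}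
    (s : UTerm (sigK K) m) : UTerm σ (1 + m) :=
  match s with
  | .var i => .var ⟨1 + i.val, by have := i.isLt; omega⟩
  | .app _ ts => (Tet t j₀ M).bind (fun i =>
      if i.val = 0 then .var ⟨0, by omega⟩
      else flat t j₀ M (ts ⟨i.val - 1, by have := i.isLt; show i.val - 1 < K + 2; omega⟩))

theorem flat_eval {K : ℕ} (Alg : UAlgebra σ A) (t : UTerm σ (K+2)) (j₀ : Fin (K+2)) (M : ℕ)
    (x : A) (C : Set A) (e : A → A) (hCe : ∀ a, e a ∈ C)
    (hTet : ∀ v : Fin (K+2) → A,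
      Alg.eval (Tet t j₀ M) (Fin.append (fun _ : Fin 1 => x) v) = e (Alg.eval t v))
    (Alg' : UAlgebra (sigK K) C)
    (hAlg' : ∀ (f : PUnit) (args : Fin (K+2) → C),
      ((Alg'.interp f args : C) : A) = e (Alg.eval t (fun j => ((args j : C) : A)))) :
    ∀ (m : ℕ) (s : UTerm (sigK K) m) (env : Fin m → C),
      Alg.eval (flat t j₀ M s) (Fin.append (fun _ : Fin 1 => x) (fun i => ((env i : C) : A))) =
      ((Alg'.eval s env : C) : A) := by
  intro m s
  induction s with
  | var i =>
      intro env
      simp only [flat]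
      show Fin.append _ _ ⟨1 + i.val, _⟩ = _
      exact append_one_right _ _ i (by have := i.isLt; omega)
  | app f ts ih =>
      intro env
      simp only [flat]
      rw [eval_bind]
      show _ = ((Alg'.interp f (fun j => Alg'.eval (ts j) env) : C) : A)
      erw [hAlg' f, ← hTet]
      congr 1
      funext i
      by_cases h0 : i.val = 0
      · rw [if_pos h0]
        show Fin.append (fun _ : Fin 1 => x) (fun i => ((env i : C) : A)) ⟨0, by omega⟩ = _
        rw [append_one_left _ _ (by omega), append_val, dif_pos (show i.val < 1 by omega)]
      · rw [if_neg h0]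
        rw [append_val, dif_neg (show ¬ i.val < 1 by omega)]
        exact ih _ env

end AbelianAbsorption

namespace AbelianAbsorption

open UAlgebra

variable {σ : Signature} {A : Type}

theorem tripleswap {α : Type*} {b c : ℕ} (p : Fin 1 → α) (q : Fin b → α) (r : Fin c → α)
    (iv : ℕ) (hv : iv < 1 + (b + c)) (hv' : iv < (1 + b) + c) :
    Fin.append (Fin.append p q) r ⟨iv, hv'⟩ = Fin.append p (Fin.append q r) ⟨iv, hv⟩ := by
  simp only [append_val]
  split_ifs <;>
    first
      | rfl
      | omega
      | (congr 1; ext; simp; omega)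

end AbelianAbsorption

namespace AbelianAbsorption

open UAlgebra

theorem master : ∀ (n : ℕ) (σ : Signature) (A : Type) (instA : Finite A) (Alg : UAlgebra σ A),
    Alg.Idempotent → Alg.Abelian → ∀ B : Set A, Alg.Absorbing B → Nat.card A ≤ n →
    B = Set.univ := by
  intro n
  induction n with
  | zero =>
      intro σ A instA Alg hidem hab B hB hcard
      obtain ⟨k, t, hNe, hSub, hAbs⟩ := hB
      obtain ⟨b₀, hb₀⟩ := hNe
      haveI := instA
      have hempty : IsEmpty A := by
        rcases Nat.card_eq_zero.mp (Nat.le_zero.mp hcard) with h | h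
        · exact h
        · exact absurd h (not_infinite_iff_finite.mpr instA)
      exact (hempty.false b₀).elim
  | succ n ihn =>
      intro σ A instA Alg hidem hab B hB hcard
      haveI := instA
      obtain ⟨k, t, hNe, hSub, hAbs⟩ := hB
      obtain ⟨b₀, hb₀⟩ := hNe
      rw [Set.eq_univ_iff_forall]
      revert t hAbs
      rcases k with _ | _ | K
      -- arity 0 : A is a singleton
      · intro t hAbs x
        have h1 := eval_const hidem t x
        have h3 : (fun _ : Fin 0 => x) = (fun _ : Fin 0 => b₀) := funext (fun i => i.elim0)
        rw [h3, eval_const hidem t b₀] at h1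
        rw [← h1]
        exact hb₀
      -- arity 1 : absorption hypothesis is vacuous
      · intro t hAbs x
        have h1 := hAbs 0 (fun _ => x) (fun i hi => absurd (by ext; omega : i = 0) hi)
        rwa [eval_const hidem t x] at h1
      -- arity K+2
      · intro t hAbs
        by_cases hinj : ∀ (j : Fin (K+2)) (u : A),
            Function.Injective (fun z => Alg.eval t (fun i => if i = j then u else z))
        · -- case β : the grading ladder
          intro x
          have hl := ladder Alg hidem hab B t b₀ hb₀ hSub hAbs hinj (fun _ => x)
          rwa [eval_const hidem t x] at hl
        · -- case 2 : pass to a proper subquotient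
          push_neg at hinj
          obtain ⟨j₀, u₀, hninj⟩ := hinj
          intro x
          have hninjx : ¬ Function.Injective
              (fun z => Alg.eval t (fun i => if i = j₀ then x else z)) := by
            intro hInjx
            apply hninj
            intro z z' heq
            have heq' : Alg.eval (Tins t j₀) (Fin.append (fun _ : Fin 1 => u₀) (fun _ => z)) =
                Alg.eval (Tins t j₀) (Fin.append (fun _ : Fin 1 => u₀) (fun _ => z')) := by
              rw [eval_Tins, eval_Tins]
              exact heq
            have htr := (hab 1 (K+1) (Tins t j₀) (fun _ => u₀) (fun _ => x)
              (fun _ => z) (fun _ => z')).mp heq'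
            rw [eval_Tins, eval_Tins] at htr
            exact hInjx htr
          set hfun : A → A := fun w => Alg.eval t (fun i => if i = j₀ then x else w) with hh
          obtain ⟨M, hM0, hMidem⟩ := exists_idem_pow hfun
          set e : A → A := hfun^[M] with he
          set C : Set A := {a | e a = a} with hC
          have hCe : ∀ a, e a ∈ C := fun a => hMidem a
          have hhx : hfun x = x := by
            rw [hh]
            show Alg.eval t _ = x
            have hcx : (fun i : Fin (K+2) => if i = j₀ then x else x) = fun _ => x := by
              funext i; split <;> rfl
            rw [hcx]
            exact eval_const hidem t x
          have hxC : x ∈ C := by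
            show e x = x
            rw [he]
            exact Function.iterate_fixed hhx M
          have hhB : ∀ β, β ∈ B → hfun β ∈ B := by
            intro β hβ
            rw [hh]
            refine hAbs j₀ _ (fun i hi => ?_)
            show (if i = j₀ then x else β) ∈ B
            rw [if_neg hi]
            exact hβ
          have heB : ∀ β, β ∈ B → e β ∈ B := by
            intro β hβ
            rw [he]
            have hiter : ∀ m, hfun^[m] β ∈ B := by
              intro m
              induction m with
              | zero => simpa using hβ
              | succ m ihm => rw [Function.iterate_succ_apply']; exact hhB _ ihm
            exact hiter M
          obtain ⟨w₁, w₂, hw12, hwne⟩ := Function.not_injective_iff.mp hninjx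
          have hew : e w₁ = e w₂ := by
            rw [he]
            obtain ⟨M', rfl⟩ : ∃ M', M = M' + 1 := ⟨M - 1, by omega⟩
            rw [Function.iterate_succ_apply, Function.iterate_succ_apply]
            rw [show hfun w₁ = hfun w₂ from hw12]
          have hCproper : C ≠ Set.univ := by
            intro hCU
            have hall : ∀ a : A, e a = a := by
              intro a
              have ha : a ∈ C := by rw [hCU]; trivial
              exact ha
            exact hwne (by rw [← hall w₁, hew, hall w₂])
          -- the smaller algebra
          set Alg' : UAlgebra (sigK K) ↥C :=
            ⟨fun _ args => ⟨e (Alg.eval t (fun j => ((args j : ↥C) : A))), hCe _⟩⟩ with hA'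
          have hAval : ∀ (f : PUnit) (args : Fin (K+2) → ↥C),
              ((Alg'.interp f args : ↥C) : A) =
                e (Alg.eval t (fun j => ((args j : ↥C) : A))) := fun _ _ => rfl
          have hTet : ∀ v : Fin (K+2) → A,
              Alg.eval (Tet t j₀ M) (Fin.append (fun _ : Fin 1 => x) v) = e (Alg.eval t v) := by
            intro v
            rw [eval_Tet, he, hh]
          have hfe := flat_eval Alg t j₀ M x C e hCe hTet Alg' hAval
          have hidem' : Alg'.Idempotent := by
            intro f c
            apply Subtype.ext
            show ((Alg'.interp f fun _ => c : ↥C) : A) = (c : A)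
            erw [hAval f]
            rw [eval_const hidem]
            exact c.2
          have hab' : Alg'.Abelian := by
            intro ℓ m s a b u v
            have key : ∀ (pp : Fin ℓ → ↥C) (qq : Fin m → ↥C),
                ((Alg'.eval s (Fin.append pp qq) : ↥C) : A) =
                Alg.eval ((flat t j₀ M s).bind
                    (fun i => (.var ⟨i.val, by have := i.isLt; omega⟩ : UTerm σ ((1+ℓ)+m))))
                  (Fin.append (Fin.append (fun _ : Fin 1 => x) (fun i => ((pp i : ↥C) : A)))
                    (fun i => ((qq i : ↥C) : A))) := by
              intro pp qq
              rw [eval_bind, ← hfe _ s (Fin.append pp qq)]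
              congr 1
              funext i
              have hvals : (fun i => ((Fin.append pp qq i : ↥C) : A)) =
                  Fin.append (fun i => ((pp i : ↥C) : A)) (fun i => ((qq i : ↥C) : A)) := by
                funext i'
                rw [append_val pp qq, append_val]
                split_ifs <;> rfl
              rw [hvals]
              exact (tripleswap (fun _ : Fin 1 => x) (fun i => ((pp i : ↥C) : A))
                (fun i => ((qq i : ↥C) : A)) i.val i.isLt (by have := i.isLt; omega)).symm
            rw [Subtype.ext_iff, Subtype.ext_iff, key a u, key a v, key b u, key b v]
            exact hab (1 + ℓ) m _
              (Fin.append (fun _ : Fin 1 => x) (fun i => ((a i : ↥C) : A)))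
              (Fin.append (fun _ : Fin 1 => x) (fun i => ((b i : ↥C) : A)))
              (fun i => ((u i : ↥C) : A)) (fun i => ((v i : ↥C) : A))
          have habs' : Alg'.Absorbing {c : ↥C | (c : A) ∈ B} := by
            refine ⟨K+2, .app PUnit.unit (fun j => .var j),
              ⟨⟨e b₀, hCe b₀⟩, heB b₀ hb₀⟩, ?_, ?_⟩
            · intro f args hargs
              show ((Alg'.interp f args : ↥C) : A) ∈ B
              erw [hAval]
              exact heB _ (eval_mem hSub t _ (fun j => hargs j))
            · intro j args hargs
              show ((Alg'.eval (.app PUnit.unit (fun j => .var j)) args : ↥C) : A) ∈ B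
              have hev : Alg'.eval (.app PUnit.unit (fun j => .var j)) args
                  = Alg'.interp PUnit.unit args := rfl
              rw [hev, hAval]
              exact heB _ (hAbs j _ (fun i hi => hargs i hi))
          have hlt : Nat.card ↥C < Nat.card A := by
            have hss : C ⊂ Set.univ := Set.ssubset_univ_iff.mpr hCproper
            have h2 := Set.ncard_lt_ncard hss Set.finite_univ
            simpa [Set.ncard_univ, Nat.card_coe_set_eq] using h2
          have hBC := ihn (sigK K) ↥C inferInstance Alg' hidem' hab'
            {c : ↥C | (c : A) ∈ B} habs' (by omega)
          have hxB : (⟨x, hxC⟩ : ↥C) ∈ {c : ↥C | (c : A) ∈ B} := by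
            rw [hBC]
            trivial
          exact hxB

end AbelianAbsorption

/-- Finite idempotent abelian algebras are absorption-free. -/
theorem abelian_absorption_free
    {σ : Signature} {A : Type} [Finite A]
    (Alg : UAlgebra σ A) (hidem : Alg.Idempotent) (hab : Alg.Abelian)
    (B : Set A) (hB : Alg.Absorbing B) : B = Set.univ := by
  exact AbelianAbsorption.master (Nat.card A) σ A ‹Finite A› Alg hidem hab B hB le_rfl
end
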